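/- arXiv:2201.05134 — 2 statements merged into one kernel-verified Lean document; each statement's English description precedes it below -/
import Mathlib

section
/- Let Φ ⊂ ℝ^n be an irreducible crystallographic root system with positive system Φ⁺ and simple system Δ ⊆ Φ⁺, and let W be the corresponding Weyl group. If α, β ∈ Φ⁺ are incomparable in the root order (neither α − β nor β − α lies in cone(Δ)), then there exists w ∈ W with wΔ ∩ Φ⁺ = {α, β}. -/
/-- Euclidean dot product on `Fin n → ℝ`. -/
def dotp {n : ℕ} (c x : Fin n → ℝ) : ℝ := ∑ i, c i * x i

/-- The reflection `s_α` in the hyperplane `α^⊥`. -/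
noncomputable def reflectRoot {n : ℕ} (α x : Fin n → ℝ) : Fin n → ℝ :=
  x - (2 * dotp α x / dotp α α) • α

/-- `Φ` is a root system in `ℝ^n`. -/
def IsRootSystem {n : ℕ} (Φ : Finset (Fin n → ℝ)) : Prop :=
  Φ.Nonempty ∧ (0 : Fin n → ℝ) ∉ Φ ∧
  (∀ α ∈ Φ, -α ∈ Φ) ∧
  (∀ α ∈ Φ, ∀ t : ℝ, t • α ∈ Φ → t = 1 ∨ t = -1) ∧
  (∀ α ∈ Φ, ∀ β ∈ Φ, reflectRoot α β ∈ Φ)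

/-- `Φ` is crystallographic. -/
def IsCrystallographic {n : ℕ} (Φ : Finset (Fin n → ℝ)) : Prop :=
  ∀ α ∈ Φ, ∀ β ∈ Φ, ∃ k : ℤ, 2 * dotp α β / dotp α α = (k : ℝ)

/-- `Φ` is irreducible: no partition into two nonempty mutually orthogonal subsets. -/
def IsIrreducibleRS {n : ℕ} (Φ : Finset (Fin n → ℝ)) : Prop :=
  ∀ S : Finset (Fin n → ℝ), S ⊆ Φ → S.Nonempty → (∃ β ∈ Φ, β ∉ S) →
    ∃ α ∈ S, ∃ β ∈ Φ, β ∉ S ∧ dotp α β ≠ 0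

/-- `w` belongs to the Weyl group of `Φ`: it is a finite composition of reflections `s_α`,
`α ∈ Φ`. -/
def InWeylGroup {n : ℕ} (Φ : Finset (Fin n → ℝ)) (w : (Fin n → ℝ) → (Fin n → ℝ)) : Prop :=
  ∃ L : List (Fin n → ℝ), (∀ α ∈ L, α ∈ Φ) ∧
    w = L.foldr (fun α f => reflectRoot α ∘ f) id

/-- `x` lies in the cone of nonnegative combinations of the finite set `S`. -/
def InCone {n : ℕ} (S : Finset (Fin n → ℝ)) (x : Fin n → ℝ) : Prop :=
  ∃ lam : (Fin n → ℝ) → ℝ, (∀ s ∈ S, 0 ≤ lam s) ∧ x = ∑ s ∈ S, lam s • s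

namespace RSaux

variable {n : ℕ}

lemma dotp_comm (x y : Fin n → ℝ) : dotp x y = dotp y x := by
  unfold dotp; exact Finset.sum_congr rfl fun i _ => mul_comm _ _

lemma dotp_add_right (x y z : Fin n → ℝ) : dotp x (y + z) = dotp x y + dotp x z := by
  unfold dotp; rw [← Finset.sum_add_distrib]
  exact Finset.sum_congr rfl fun i _ => by simp [Pi.add_apply, mul_add]

lemma dotp_smul_right (r : ℝ) (x y : Fin n → ℝ) : dotp x (r • y) = r * dotp x y := by
  unfold dotp; rw [Finset.mul_sum]
  exact Finset.sum_congr rfl fun i _ => by simp [Pi.smul_apply, smul_eq_mul]; ring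

lemma dotp_neg_right (x y : Fin n → ℝ) : dotp x (-y) = - dotp x y := by
  have := dotp_smul_right (-1) x y; simpa using this

lemma dotp_sub_right (x y z : Fin n → ℝ) : dotp x (y - z) = dotp x y - dotp x z := by
  have h : y - z = y + (-z) := by abel
  rw [h, dotp_add_right, dotp_neg_right]; ring

lemma dotp_add_left (x y z : Fin n → ℝ) : dotp (x + y) z = dotp x z + dotp y z := by
  rw [dotp_comm, dotp_add_right, dotp_comm z x, dotp_comm z y]

lemma dotp_smul_left (r : ℝ) (x y : Fin n → ℝ) : dotp (r • x) y = r * dotp x y := by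
  rw [dotp_comm, dotp_smul_right, dotp_comm]

lemma dotp_sub_left (x y z : Fin n → ℝ) : dotp (x - y) z = dotp x z - dotp y z := by
  rw [dotp_comm, dotp_sub_right, dotp_comm z x, dotp_comm z y]

lemma dotp_neg_left (x y : Fin n → ℝ) : dotp (-x) y = - dotp x y := by
  rw [dotp_comm, dotp_neg_right, dotp_comm]

lemma dotp_self_nonneg (x : Fin n → ℝ) : 0 ≤ dotp x x :=
  Finset.sum_nonneg fun i _ => mul_self_nonneg _

lemma dotp_self_pos {x : Fin n → ℝ} (hx : x ≠ 0) : 0 < dotp x x := by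
  obtain ⟨i, hi⟩ : ∃ i, x i ≠ 0 := by
    by_contra h; push_neg at h; exact hx (funext fun i => h i)
  exact Finset.sum_pos' (fun j _ => mul_self_nonneg _) ⟨i, Finset.mem_univ i, mul_self_pos.2 hi⟩

lemma eq_zero_of_dotp_self_eq_zero {x : Fin n → ℝ} (h : dotp x x = 0) : x = 0 := by
  by_contra hx; exact absurd h (ne_of_gt (dotp_self_pos hx))

lemma dotp_sum_right (x : Fin n → ℝ) (S : Finset (Fin n → ℝ)) (f : (Fin n → ℝ) → (Fin n → ℝ)) :
    dotp x (∑ s ∈ S, f s) = ∑ s ∈ S, dotp x (f s) := by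
  classical
  induction S using Finset.induction_on with
  | empty => simp [dotp]
  | @insert a S' hne ih => rw [Finset.sum_insert hne, dotp_add_right, ih,
      Finset.sum_insert hne]

/-- Cauchy–Schwarz, non-strict. -/
lemma dotp_cs (u v : Fin n → ℝ) : dotp u v ^ 2 ≤ dotp u u * dotp v v := by
  rcases eq_or_ne v 0 with rfl | hv
  · simp [dotp]
  · have hvv : 0 < dotp v v := dotp_self_pos hv
    have h := dotp_self_nonneg (dotp v v • u - dotp u v • v)
    simp only [dotp_sub_left, dotp_sub_right, dotp_smul_left, dotp_smul_right] at h
    rw [dotp_comm v u] at h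
    nlinarith [hvv, h]

/-- Strict Cauchy–Schwarz for independent-ish vectors. -/
lemma dotp_cs_strict {u v : Fin n → ℝ} (hv : v ≠ 0)
    (hind : dotp v v • u - dotp u v • v ≠ 0) : dotp u v ^ 2 < dotp u u * dotp v v := by
  have hvv : 0 < dotp v v := dotp_self_pos hv
  have h := dotp_self_pos hind
  simp only [dotp_sub_left, dotp_sub_right, dotp_smul_left, dotp_smul_right] at h
  rw [dotp_comm v u] at h
  nlinarith [hvv, h]

lemma reflect_apply (a x : Fin n → ℝ) :
    reflectRoot a x = x - (2 * dotp a x / dotp a a) • a := rfl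

lemma dotp_reflect_right (a x y : Fin n → ℝ) :
    dotp x (reflectRoot a y) = dotp x y - (2 * dotp a y / dotp a a) * dotp x a := by
  rw [reflect_apply, dotp_sub_right, dotp_smul_right]

lemma reflect_symm_dotp (a x y : Fin n → ℝ) :
    dotp (reflectRoot a x) y = dotp x (reflectRoot a y) := by
  rw [dotp_comm, dotp_reflect_right, dotp_reflect_right, dotp_comm y x, dotp_comm y a,
    dotp_comm x a]
  ring

lemma reflect_reflect {a : Fin n → ℝ} (ha : dotp a a ≠ 0) (x : Fin n → ℝ) :
    reflectRoot a (reflectRoot a x) = x := by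
  rw [reflect_apply, reflect_apply]
  have h : dotp a (x - (2 * dotp a x / dotp a a) • a) = - dotp a x := by
    rw [dotp_sub_right, dotp_smul_right]; field_simp; ring
  rw [h]
  have h2 : 2 * (- dotp a x) / dotp a a = - (2 * dotp a x / dotp a a) := by ring
  rw [h2, neg_smul, sub_neg_eq_add, sub_add_cancel]

lemma reflect_add (a x y : Fin n → ℝ) :
    reflectRoot a (x + y) = reflectRoot a x + reflectRoot a y := by
  simp only [reflect_apply, dotp_add_right]
  have : (2 * (dotp a x + dotp a y) / dotp a a) = 2 * dotp a x / dotp a a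
      + 2 * dotp a y / dotp a a := by ring
  rw [this, add_smul]; abel

lemma reflect_smul (a : Fin n → ℝ) (r : ℝ) (x : Fin n → ℝ) :
    reflectRoot a (r • x) = r • reflectRoot a x := by
  simp only [reflect_apply, dotp_smul_right, smul_sub, smul_smul]
  congr 1
  congr 1
  ring

lemma reflect_self {a : Fin n → ℝ} (ha : dotp a a ≠ 0) : reflectRoot a a = -a := by
  rw [reflect_apply]
  have : 2 * dotp a a / dotp a a = 2 := by field_simp
  rw [this, two_smul]; abel

end RSaux

namespace RSaux
variable {n : ℕ}

lemma incone_zero (S : Finset (Fin n → ℝ)) : InCone S 0 :=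
  ⟨fun _ => 0, fun _ _ => le_rfl, by simp⟩

lemma incone_mem {S : Finset (Fin n → ℝ)} {s : Fin n → ℝ} (hs : s ∈ S) : InCone S s := by
  classical
  refine ⟨fun t => if t = s then 1 else 0, fun t _ => by positivity, ?_⟩
  rw [Finset.sum_eq_single s]
  · simp
  · intro b _ hb; simp [hb]
  · intro h; exact absurd hs h

lemma incone_mono {S T : Finset (Fin n → ℝ)} (hST : S ⊆ T) {x : Fin n → ℝ}
    (hx : InCone S x) : InCone T x := by
  classical
  obtain ⟨lam, hlam, hsum⟩ := hx
  refine ⟨fun t => if t ∈ S then lam t else 0, fun t _ => ?_, ?_⟩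
  · dsimp only; split
    · exact hlam _ ‹_›
    · exact le_rfl
  · rw [hsum, ← Finset.sum_subset hST (fun t _ ht => by simp [ht])]
    exact Finset.sum_congr rfl fun s hs => by simp [hs]

lemma incone_smul {S : Finset (Fin n → ℝ)} {x : Fin n → ℝ} {t : ℝ} (ht : 0 ≤ t)
    (hx : InCone S x) : InCone S (t • x) := by
  obtain ⟨lam, hlam, hsum⟩ := hx
  refine ⟨fun s => t * lam s, fun s hs => mul_nonneg ht (hlam s hs), ?_⟩
  rw [hsum, Finset.smul_sum]
  exact Finset.sum_congr rfl fun s _ => by rw [smul_smul]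

lemma incone_pair {S : Finset (Fin n → ℝ)} {a b : Fin n → ℝ} (ha : a ∈ S) (hb : b ∈ S)
    (hab : a ≠ b) {p q : ℝ} (hp : 0 ≤ p) (hq : 0 ≤ q) : InCone S (p • a + q • b) := by
  classical
  refine ⟨fun t => if t = a then p else if t = b then q else 0, fun t _ => by
    dsimp only; split; exact hp; split; exact hq; exact le_rfl, ?_⟩
  have hsub : {a, b} ⊆ S := by
    intro t ht; rcases Finset.mem_insert.1 ht with rfl | ht
    · exact ha
    · rw [Finset.mem_singleton] at ht; subst ht; exact hb
  rw [← Finset.sum_subset hsub]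
  · rw [Finset.sum_insert (by simpa using hab), Finset.sum_singleton]
    simp [hab, Ne.symm hab]
  · intro t _ ht
    simp only [Finset.mem_insert, Finset.mem_singleton, not_or] at ht
    simp [ht.1, ht.2]

lemma incone_single {S : Finset (Fin n → ℝ)} {a : Fin n → ℝ} (ha : a ∈ S)
    {p : ℝ} (hp : 0 ≤ p) : InCone S (p • a) := incone_smul hp (incone_mem ha)

lemma incone_dotp_nonneg {S : Finset (Fin n → ℝ)} {x u : Fin n → ℝ}
    (hx : InCone S x) (hS : ∀ s ∈ S, 0 ≤ dotp u s) : 0 ≤ dotp u x := by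
  obtain ⟨lam, hlam, hsum⟩ := hx
  rw [hsum, dotp_sum_right]
  exact Finset.sum_nonneg fun s hs => by
    rw [dotp_smul_right]; exact mul_nonneg (hlam s hs) (hS s hs)

/-- a function commuting with + and • maps cones to cones. -/
lemma incone_map {S : Finset (Fin n → ℝ)} {x : Fin n → ℝ} (u v : (Fin n → ℝ) → (Fin n → ℝ))
    (hadd : ∀ a b, u (a + b) = u a + u b) (hsmul : ∀ (r : ℝ) a, u (r • a) = r • u a)
    (hvu : ∀ a, v (u a) = a) (huv : ∀ a, u (v a) = a)
    (hx : InCone S x) : InCone (S.image u) (u x) := by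
  classical
  obtain ⟨lam, hlam, hsum⟩ := hx
  have hinj : Function.Injective u := fun a b h => by
    have := congrArg v h; rwa [hvu, hvu] at this
  have hu0 : u 0 = 0 := by
    have := hsmul 0 0; simpa using this
  have husum : ∀ (T : Finset (Fin n → ℝ)) (f : (Fin n → ℝ) → (Fin n → ℝ)),
      u (∑ s ∈ T, f s) = ∑ s ∈ T, u (f s) := by
    intro T f
    induction T using Finset.induction_on with
    | empty => simpa using hu0
    | @insert a T' hne ih => rw [Finset.sum_insert hne, hadd, ih, Finset.sum_insert hne]
  refine ⟨fun t => lam (v t), fun t ht => ?_, ?_⟩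
  · obtain ⟨s, hs, rfl⟩ := Finset.mem_image.1 ht
    show 0 ≤ lam (v (u s))
    rw [hvu]; exact hlam s hs
  · rw [hsum, husum, Finset.sum_image (fun a _ b _ h => hinj h)]
    refine Finset.sum_congr rfl fun s _ => ?_
    show u (lam s • s) = lam (v (u s)) • u s
    rw [hvu, hsmul]

lemma foldr_comp (L : List (Fin n → ℝ)) (g : (Fin n → ℝ) → (Fin n → ℝ)) :
    L.foldr (fun α f => reflectRoot α ∘ f) g
      = (L.foldr (fun α f => reflectRoot α ∘ f) id) ∘ g := by
  induction L with
  | nil => rfl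
  | cons b Lb ihb => simp only [List.foldr_cons, ihb, Function.comp_assoc]

/-- bundled properties of Weyl group elements. -/
lemma weyl_props {Φ : Finset (Fin n → ℝ)} (hRS : IsRootSystem Φ)
    {w : (Fin n → ℝ) → (Fin n → ℝ)}
    (hw : ∃ L : List (Fin n → ℝ), (∀ α ∈ L, α ∈ Φ) ∧
      w = L.foldr (fun α f => reflectRoot α ∘ f) id) :
    (∀ x ∈ Φ, w x ∈ Φ) ∧ (∀ a b, w (a + b) = w a + w b) ∧
    (∀ (r : ℝ) a, w (r • a) = r • w a) ∧
    ∃ w', (∃ L : List (Fin n → ℝ), (∀ α ∈ L, α ∈ Φ) ∧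
      w' = L.foldr (fun α f => reflectRoot α ∘ f) id) ∧
      (∀ a, w' (w a) = a) ∧ (∀ a, w (w' a) = a) := by
  classical
  obtain ⟨L, hL, rfl⟩ := hw
  induction L with
  | nil =>
    refine ⟨fun x hx => hx, fun a b => rfl, fun r a => rfl, id, ⟨[], by simp, rfl⟩,
      fun a => rfl, fun a => rfl⟩
  | cons a L ih =>
    have haΦ : a ∈ Φ := hL a (List.mem_cons_self)
    have ha0 : a ≠ 0 := fun h => hRS.2.1 (h ▸ haΦ)
    have haa : dotp a a ≠ 0 := ne_of_gt (dotp_self_pos ha0)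
    obtain ⟨hmem, hadd, hsmul, w', hw', hvu, huv⟩ := ih (fun x hx => hL x (List.mem_cons_of_mem a hx))
    set v := L.foldr (fun α f => reflectRoot α ∘ f) id
    refine ⟨?_, ?_, ?_, ?_⟩
    · intro x hx
      exact hRS.2.2.2.2 a haΦ (v x) (hmem x hx)
    · intro x y
      show reflectRoot a (v (x + y)) = _
      rw [hadd, reflect_add]; rfl
    · intro r x
      show reflectRoot a (v (r • x)) = _
      rw [hsmul, reflect_smul]; rfl
    · obtain ⟨L', hL', hw'eq⟩ := hw'
      refine ⟨w' ∘ reflectRoot a, ⟨L' ++ [a], ?_, ?_⟩, ?_, ?_⟩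
      · intro x hx
        rcases List.mem_append.1 hx with h | h
        · exact hL' x h
        · simp at h; subst h; exact haΦ
      · rw [List.foldr_append]
        simp only [List.foldr_cons, List.foldr_nil]
        rw [hw'eq, foldr_comp L' (reflectRoot a ∘ id)]
        rfl
      · intro x
        show w' (reflectRoot a (reflectRoot a (v x))) = x
        rw [reflect_reflect haa, hvu]
      · intro x
        show reflectRoot a (v (w' (reflectRoot a x))) = x
        rw [huv, reflect_reflect haa]

end RSaux

namespace RSaux
variable {n : ℕ}

/-- If two distinct roots have positive inner product, their difference is a root. -/
lemma root_sub {Φ : Finset (Fin n → ℝ)} (hRS : IsRootSystem Φ)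
    (hCr : IsCrystallographic Φ) {u v : Fin n → ℝ} (hu : u ∈ Φ) (hv : v ∈ Φ)
    (huv : 0 < dotp u v) (hne : u ≠ v) : u - v ∈ Φ := by
  have hu0 : u ≠ 0 := fun h => hRS.2.1 (h ▸ hu)
  have hv0 : v ≠ 0 := fun h => hRS.2.1 (h ▸ hv)
  have huu : 0 < dotp u u := dotp_self_pos hu0
  have hvv : 0 < dotp v v := dotp_self_pos hv0
  obtain ⟨k, hk⟩ := hCr v hv u hu
  obtain ⟨l, hl⟩ := hCr u hu v hv
  have hvu : dotp v u = dotp u v := dotp_comm v u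
  have hk0 : (0:ℝ) < (k:ℝ) := by rw [← hk, hvu]; positivity
  have hl0 : (0:ℝ) < (l:ℝ) := by rw [← hl]; positivity
  have hk1 : 1 ≤ k := by exact_mod_cast hk0
  have hl1 : 1 ≤ l := by exact_mod_cast hl0
  by_cases hkone : k = 1
  · have hrefl := hRS.2.2.2.2 v hv u hu
    rw [reflect_apply, hk, hkone] at hrefl
    simpa using hrefl
  by_cases hlone : l = 1
  · have hrefl := hRS.2.2.2.2 u hu v hv
    rw [reflect_apply, hl, hlone] at hrefl
    simp only [Int.cast_one, one_smul] at hrefl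
    have := hRS.2.2.1 _ hrefl
    simpa using this
  -- now k, l ≥ 2
  have hk2 : 2 ≤ k := by omega
  have hl2 : 2 ≤ l := by omega
  have hcs := dotp_cs u v
  have hklr : (k:ℝ) * (l:ℝ) = 4 * dotp u v ^ 2 / (dotp u u * dotp v v) := by
    rw [← hk, ← hl, hvu]; field_simp; ring
  have hkl4 : (k:ℝ) * (l:ℝ) ≤ 4 := by
    rw [hklr]
    rw [div_le_iff₀ (by positivity)]
    nlinarith
  have hkl4' : k * l ≤ 4 := by exact_mod_cast hkl4
  have hkk : k = 2 ∧ l = 2 := by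
    constructor <;> nlinarith [hkl4', hk2, hl2]
  obtain ⟨rfl, rfl⟩ := hkk
  -- dotp u v = dotp v v and dotp u v = dotp u u
  have h1 : dotp u v = dotp v v := by
    have : 2 * dotp v u / dotp v v = 2 := by rw [hk]; norm_num
    field_simp at this; linarith [hvu]
  have h2 : dotp u v = dotp u u := by
    have : 2 * dotp u v / dotp u u = 2 := by rw [hl]; norm_num
    field_simp at this; linarith
  exfalso
  apply hne
  have hz : dotp (u - v) (u - v) = 0 := by
    rw [dotp_sub_left, dotp_sub_right, dotp_sub_right, hvu]
    linarith
  have := eq_zero_of_dotp_self_eq_zero hz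
  have : u - v = 0 := this
  linear_combination (norm := abel) this

/-- choose a uniform small ε. -/
lemma exists_eps (F : Finset (Fin n → ℝ)) (u : Fin n → ℝ) (b : (Fin n → ℝ) → ℝ)
    (hb : ∀ γ ∈ F, 0 < b γ) :
    ∃ ε : ℝ, 0 < ε ∧ ε < 1 ∧ ∀ γ ∈ F, ε * |dotp u γ| < b γ := by
  classical
  set T := insert ((1:ℝ)/2) (F.image fun γ => b γ / (2 * (|dotp u γ| + 1))) with hT
  have hTne : T.Nonempty := ⟨1/2, Finset.mem_insert_self _ _⟩
  have hpos : 0 < T.min' hTne := by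
    have hmem := T.min'_mem hTne
    rcases Finset.mem_insert.1 hmem with h | h
    · rw [h]; norm_num
    · obtain ⟨γ, hγ, heq⟩ := Finset.mem_image.1 h
      rw [← heq]; have := hb γ hγ; positivity
  refine ⟨T.min' hTne, hpos, ?_, ?_⟩
  · have : T.min' hTne ≤ 1/2 := Finset.min'_le _ _ (Finset.mem_insert_self _ _)
    linarith
  · intro γ hγ
    have h1 : T.min' hTne ≤ b γ / (2 * (|dotp u γ| + 1)) :=
      Finset.min'_le _ _ (Finset.mem_insert_of_mem (Finset.mem_image_of_mem _ hγ))
    have habs : (0:ℝ) ≤ |dotp u γ| := abs_nonneg _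
    have hbγ := hb γ hγ
    have h2 : b γ / (2 * (|dotp u γ| + 1)) * |dotp u γ| < b γ := by
      rw [div_mul_eq_mul_div, div_lt_iff₀ (by positivity)]
      nlinarith
    calc T.min' hTne * |dotp u γ| ≤ b γ / (2 * (|dotp u γ| + 1)) * |dotp u γ| :=
          mul_le_mul_of_nonneg_right h1 habs
      _ < b γ := h2

end RSaux

namespace RSaux
variable {n : ℕ}

/-- `α`-coordinate of the projection of `x` to the plane spanned by `α, β`. -/
noncomputable def ac (α β x : Fin n → ℝ) : ℝ :=
  (dotp β β * dotp α x - dotp α β * dotp β x) / (dotp α α * dotp β β - dotp α β ^ 2)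

/-- `β`-coordinate of the projection of `x` to the plane spanned by `α, β`. -/
noncomputable def bc (α β x : Fin n → ℝ) : ℝ :=
  (dotp α α * dotp β x - dotp α β * dotp α x) / (dotp α α * dotp β β - dotp α β ^ 2)

/-- `x` lies in the plane spanned by `α, β`. -/
def Planar (α β x : Fin n → ℝ) : Prop := x = ac α β x • α + bc α β x • β

variable {α β : Fin n → ℝ}

lemma ac_add (x y : Fin n → ℝ) : ac α β (x + y) = ac α β x + ac α β y := by
  unfold ac; rw [dotp_add_right, dotp_add_right]; ring

lemma bc_add (x y : Fin n → ℝ) : bc α β (x + y) = bc α β x + bc α β y := by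
  unfold bc; rw [dotp_add_right, dotp_add_right]; ring

lemma ac_smul (r : ℝ) (x : Fin n → ℝ) : ac α β (r • x) = r * ac α β x := by
  unfold ac; rw [dotp_smul_right, dotp_smul_right]; ring

lemma bc_smul (r : ℝ) (x : Fin n → ℝ) : bc α β (r • x) = r * bc α β x := by
  unfold bc; rw [dotp_smul_right, dotp_smul_right]; ring

lemma ac_neg (x : Fin n → ℝ) : ac α β (-x) = - ac α β x := by
  unfold ac; rw [dotp_neg_right, dotp_neg_right]; ring

lemma bc_neg (x : Fin n → ℝ) : bc α β (-x) = - bc α β x := by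
  unfold bc; rw [dotp_neg_right, dotp_neg_right]; ring

lemma ac_sub (x y : Fin n → ℝ) : ac α β (x - y) = ac α β x - ac α β y := by
  unfold ac; rw [dotp_sub_right, dotp_sub_right]; ring

lemma bc_sub (x y : Fin n → ℝ) : bc α β (x - y) = bc α β x - bc α β y := by
  unfold bc; rw [dotp_sub_right, dotp_sub_right]; ring

section det
variable (hdet : 0 < dotp α α * dotp β β - dotp α β ^ 2)
include hdet

lemma ac_alpha : ac α β α = 1 := by
  unfold ac; rw [div_eq_one_iff_eq (ne_of_gt hdet), dotp_comm β α]; ring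

lemma ac_beta : ac α β β = 0 := by
  unfold ac; rw [div_eq_zero_iff]; left; ring

lemma bc_alpha : bc α β α = 0 := by
  unfold bc; rw [div_eq_zero_iff]; left; rw [dotp_comm β α]; ring

lemma bc_beta : bc α β β = 1 := by
  unfold bc; rw [div_eq_one_iff_eq (ne_of_gt hdet)]; ring

lemma ac_comb (x y : ℝ) : ac α β (x • α + y • β) = x := by
  rw [ac_add, ac_smul, ac_smul, ac_alpha hdet, ac_beta hdet]; ring

lemma bc_comb (x y : ℝ) : bc α β (x • α + y • β) = y := by
  rw [bc_add, bc_smul, bc_smul, bc_alpha hdet, bc_beta hdet]; ring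

lemma planar_comb (x y : ℝ) : Planar α β (x • α + y • β) := by
  unfold Planar; rw [ac_comb hdet, bc_comb hdet]

lemma planar_alpha : Planar α β α := by
  have := planar_comb hdet 1 0; simpa using this

lemma planar_beta : Planar α β β := by
  have := planar_comb hdet 0 1; simpa using this

end det

lemma planar_add {x y : Fin n → ℝ} (hx : Planar α β x) (hy : Planar α β y) :
    Planar α β (x + y) := by
  unfold Planar at *
  rw [ac_add, bc_add, add_smul, add_smul]
  calc x + y = (ac α β x • α + bc α β x • β) + (ac α β y • α + bc α β y • β) := by
        rw [← hx, ← hy]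
    _ = _ := by abel

lemma planar_smul {x : Fin n → ℝ} (r : ℝ) (hx : Planar α β x) : Planar α β (r • x) := by
  unfold Planar at *
  rw [ac_smul, bc_smul, mul_smul, mul_smul, ← smul_add, ← hx]

lemma planar_neg {x : Fin n → ℝ} (hx : Planar α β x) : Planar α β (-x) := by
  have := planar_smul (-1) hx; simpa using this

lemma planar_sub {x y : Fin n → ℝ} (hx : Planar α β x) (hy : Planar α β y) :
    Planar α β (x - y) := by
  have := planar_add hx (planar_neg hy); simpa [sub_eq_add_neg] using this

/-- the projection reproduces inner products with `α`. -/
lemma dotp_proj_alpha (hdet : 0 < dotp α α * dotp β β - dotp α β ^ 2) (x : Fin n → ℝ) :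
    dotp (ac α β x • α + bc α β x • β) α = dotp x α := by
  rw [dotp_add_left, dotp_smul_left, dotp_smul_left]
  unfold ac bc
  rw [dotp_comm β α, dotp_comm x α]
  have hne : dotp α α * dotp β β - dotp α β ^ 2 ≠ 0 := ne_of_gt hdet
  simp only [div_eq_mul_inv]
  linear_combination (dotp α x) * mul_inv_cancel₀ hne

lemma dotp_proj_beta (hdet : 0 < dotp α α * dotp β β - dotp α β ^ 2) (x : Fin n → ℝ) :
    dotp (ac α β x • α + bc α β x • β) β = dotp x β := by
  rw [dotp_add_left, dotp_smul_left, dotp_smul_left]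
  unfold ac bc
  rw [dotp_comm x β]
  have hne : dotp α α * dotp β β - dotp α β ^ 2 ≠ 0 := ne_of_gt hdet
  simp only [div_eq_mul_inv]
  linear_combination (dotp β x) * mul_inv_cancel₀ hne

/-- the projection is symmetric. -/
lemma dotp_proj_symm (hdet : 0 < dotp α α * dotp β β - dotp α β ^ 2) (x y : Fin n → ℝ) :
    dotp (ac α β x • α + bc α β x • β) y = dotp x (ac α β y • α + bc α β y • β) := by
  rw [dotp_add_left, dotp_smul_left, dotp_smul_left, dotp_add_right, dotp_smul_right,
    dotp_smul_right]
  unfold ac bc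
  rw [dotp_comm x α, dotp_comm x β, dotp_comm α y, dotp_comm β y]
  field_simp
  ring

lemma ac_sum (S : Finset (Fin n → ℝ)) (f : (Fin n → ℝ) → ℝ) :
    ac α β (∑ s ∈ S, f s • s) = ∑ s ∈ S, f s * ac α β s := by
  classical
  induction S using Finset.induction_on with
  | empty => simp [ac, dotp]
  | @insert a S' hne ih =>
    rw [Finset.sum_insert hne, ac_add, ac_smul, ih, Finset.sum_insert hne]

lemma bc_sum (S : Finset (Fin n → ℝ)) (f : (Fin n → ℝ) → ℝ) :
    bc α β (∑ s ∈ S, f s • s) = ∑ s ∈ S, f s * bc α β s := by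
  classical
  induction S using Finset.induction_on with
  | empty => simp [bc, dotp]
  | @insert a S' hne ih =>
    rw [Finset.sum_insert hne, bc_add, bc_smul, ih, Finset.sum_insert hne]

/-- substitute a cone representation of an element into a cone. -/
lemma incone_erase_of_incone {S : Finset (Fin n → ℝ)} {x t : Fin n → ℝ} (ht : t ∈ S)
    (hx : InCone S x) (htc : InCone (S.erase t) t) : InCone (S.erase t) x := by
  classical
  obtain ⟨lam, hlam, hsum⟩ := hx
  obtain ⟨mu, hmu, hmusum⟩ := htc
  refine ⟨fun s => lam s + lam t * mu s, fun s hs => add_nonneg (hlam s (Finset.mem_of_mem_erase hs))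
    (mul_nonneg (hlam t ht) (hmu s hs)), ?_⟩
  have hsplit : x = lam t • t + ∑ s ∈ S.erase t, lam s • s := by
    rw [hsum, ← Finset.add_sum_erase _ _ ht]
  have h2 : lam t • t = ∑ s ∈ S.erase t, (lam t * mu s) • s := by
    have h3 : lam t • t = lam t • ∑ s ∈ S.erase t, mu s • s := by rw [← hmusum]
    rw [h3, Finset.smul_sum]
    exact Finset.sum_congr rfl fun s _ => by rw [smul_smul]
  rw [hsplit, h2, ← Finset.sum_add_distrib]
  refine Finset.sum_congr rfl fun s hs => ?_
  rw [add_smul, add_comm]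

end RSaux

namespace RSaux
variable {n : ℕ}

/-- key lemma: reflection in a simple root permutes the other positive roots. -/
lemma simple_reflect_pos {Φ : Finset (Fin n → ℝ)} (hRS : IsRootSystem Φ)
    {c : Fin n → ℝ} (hc : ∀ γ ∈ Φ, dotp c γ ≠ 0)
    {Δ : Finset (Fin n → ℝ)} (hΔpos : ∀ δ ∈ Δ, δ ∈ Φ ∧ 0 < dotp c δ)
    (hΔgen : ∀ γ ∈ Φ, 0 < dotp c γ → InCone Δ γ)
    (hΔmin : ∀ Δ' : Finset (Fin n → ℝ), (∀ δ ∈ Δ', δ ∈ Φ ∧ 0 < dotp c δ) →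
      (∀ γ ∈ Φ, 0 < dotp c γ → InCone Δ' γ) → Δ ⊆ Δ')
    {δ : Fin n → ℝ} (hδ : δ ∈ Δ) {γ : Fin n → ℝ} (hγ : γ ∈ Φ) (hcγ : 0 < dotp c γ)
    (hne : γ ≠ δ) : reflectRoot δ γ ∈ Φ ∧ 0 < dotp c (reflectRoot δ γ) := by
  classical
  obtain ⟨hδΦ, hcδ⟩ := hΔpos δ hδ
  have hmem : reflectRoot δ γ ∈ Φ := hRS.2.2.2.2 δ hδΦ γ hγ
  refine ⟨hmem, ?_⟩
  by_contra hneg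
  have hlt : dotp c (reflectRoot δ γ) < 0 :=
    lt_of_le_of_ne (not_lt.1 hneg) (hc _ hmem)
  have hnegmem : -(reflectRoot δ γ) ∈ Φ := hRS.2.2.1 _ hmem
  have hcneg : 0 < dotp c (-(reflectRoot δ γ)) := by rw [dotp_neg_right]; linarith
  obtain ⟨lam, hlam, hlams⟩ := hΔgen γ hγ hcγ
  obtain ⟨mu, hmu, hmus⟩ := hΔgen _ hnegmem hcneg
  set k := 2 * dotp δ γ / dotp δ δ with hk
  have hrefl : reflectRoot δ γ = γ - k • δ := rfl
  have hE : ∑ s ∈ Δ, (lam s + mu s) • s = k • δ := by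
    calc ∑ s ∈ Δ, (lam s + mu s) • s
        = (∑ s ∈ Δ, lam s • s) + ∑ s ∈ Δ, mu s • s := by
          rw [← Finset.sum_add_distrib]
          exact Finset.sum_congr rfl fun s _ => add_smul _ _ _
      _ = γ + -(reflectRoot δ γ) := by rw [← hlams, ← hmus]
      _ = k • δ := by rw [hrefl]; abel
  rcases le_or_gt k (lam δ + mu δ) with hcase | hcase
  · set θ : (Fin n → ℝ) → ℝ := fun s => (lam s + mu s) - (if s = δ then k else 0) with hθ
    have hθ0 : ∀ s ∈ Δ, 0 ≤ θ s := by
      intro s hs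
      rw [hθ]; dsimp only; split
      · subst ‹s = δ›; linarith
      · have := hlam s hs; have := hmu s hs; linarith
    have hθsum : ∑ s ∈ Δ, θ s • s = 0 := by
      have h1 : ∑ s ∈ Δ, ((if s = δ then k else 0) • s) = k • δ := by
        simp only [ite_smul, zero_smul]
        rw [Finset.sum_ite_eq' Δ δ (fun s => k • s)]
        simp [hδ]
      have h2 : ∀ s ∈ Δ, θ s • s = (lam s + mu s) • s - (if s = δ then k else 0) • s :=
        fun s _ => by rw [hθ]; dsimp only; rw [sub_smul]
      rw [Finset.sum_congr rfl h2, Finset.sum_sub_distrib, hE, h1, sub_self]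
    have hdotc : ∑ s ∈ Δ, θ s * dotp c s = 0 := by
      have h3 := congrArg (dotp c) hθsum
      rw [dotp_sum_right] at h3
      have h4 : dotp c (0 : Fin n → ℝ) = 0 := by simp [dotp]
      rw [h4] at h3
      rw [← h3]
      exact Finset.sum_congr rfl fun s _ => (dotp_smul_right _ _ _).symm
    have hall := (Finset.sum_eq_zero_iff_of_nonneg
      (fun s hs => mul_nonneg (hθ0 s hs) (le_of_lt (hΔpos s hs).2))).1 hdotc
    have hθz : ∀ s ∈ Δ, θ s = 0 := by
      intro s hs
      rcases mul_eq_zero.1 (hall s hs) with h | h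
      · exact h
      · exact absurd h (ne_of_gt (hΔpos s hs).2)
    have hlam0 : ∀ s ∈ Δ, s ≠ δ → lam s = 0 := by
      intro s hs hsne
      have h5 := hθz s hs
      rw [hθ] at h5; simp only [hsne, if_false] at h5
      have := hmu s hs; have := hlam s hs; linarith
    have hγeq : γ = lam δ • δ := by
      rw [hlams, Finset.sum_eq_single δ]
      · intro b hb hbne; rw [hlam0 b hb hbne, zero_smul]
      · intro h; exact absurd hδ h
    rcases hRS.2.2.2.1 δ hδΦ (lam δ) (hγeq ▸ hγ) with h1 | h1
    · rw [h1, one_smul] at hγeq; exact hne hγeq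
    · rw [h1] at hγeq
      rw [hγeq, dotp_smul_right] at hcγ
      linarith
  · have hcone : InCone (Δ.erase δ) δ := by
      have hkν : (0:ℝ) < k - (lam δ + mu δ) := by linarith
      refine ⟨fun s => (lam s + mu s) / (k - (lam δ + mu δ)), fun s hs =>
        div_nonneg (add_nonneg (hlam s (Finset.mem_of_mem_erase hs))
          (hmu s (Finset.mem_of_mem_erase hs))) (le_of_lt hkν), ?_⟩
      have h4 := Finset.add_sum_erase Δ (fun s => (lam s + mu s) • s) hδ
      rw [hE] at h4
      have hsplit : (k - (lam δ + mu δ)) • δ = ∑ s ∈ Δ.erase δ, (lam s + mu s) • s := by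
        rw [sub_smul, ← h4]; abel
      calc δ = (k - (lam δ + mu δ))⁻¹ • ((k - (lam δ + mu δ)) • δ) := by
            rw [smul_smul, inv_mul_cancel₀ (ne_of_gt hkν), one_smul]
        _ = (k - (lam δ + mu δ))⁻¹ • ∑ s ∈ Δ.erase δ, (lam s + mu s) • s := by rw [hsplit]
        _ = ∑ s ∈ Δ.erase δ, ((lam s + mu s) / (k - (lam δ + mu δ))) • s := by
            rw [Finset.smul_sum]
            exact Finset.sum_congr rfl fun s _ => by
              rw [smul_smul, div_eq_inv_mul]
    have hgen' : ∀ γ' ∈ Φ, 0 < dotp c γ' → InCone (Δ.erase δ) γ' := fun γ' hγ' hcγ' =>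
      incone_erase_of_incone hδ (hΔgen γ' hγ' hcγ') hcone
    have hsub := hΔmin (Δ.erase δ)
      (fun s hs => hΔpos s (Finset.mem_of_mem_erase hs)) hgen'
    exact absurd (hsub hδ) (Finset.notMem_erase δ Δ)

/-- transitivity: some Weyl element carries the positive system to the system of `z`. -/
lemma weyl_trans {Φ : Finset (Fin n → ℝ)} (hRS : IsRootSystem Φ)
    {c : Fin n → ℝ} (hc : ∀ γ ∈ Φ, dotp c γ ≠ 0)
    {Δ : Finset (Fin n → ℝ)} (hΔpos : ∀ δ ∈ Δ, δ ∈ Φ ∧ 0 < dotp c δ)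
    (hΔgen : ∀ γ ∈ Φ, 0 < dotp c γ → InCone Δ γ)
    (hΔmin : ∀ Δ' : Finset (Fin n → ℝ), (∀ δ ∈ Δ', δ ∈ Φ ∧ 0 < dotp c δ) →
      (∀ γ ∈ Φ, 0 < dotp c γ → InCone Δ' γ) → Δ ⊆ Δ') :
    ∀ d : ℕ, ∀ z : Fin n → ℝ, (∀ γ ∈ Φ, dotp z γ ≠ 0) →
    (Φ.filter (fun γ => 0 < dotp c γ ∧ dotp z γ < 0)).card = d →
    ∃ w : (Fin n → ℝ) → (Fin n → ℝ),
      (∃ L : List (Fin n → ℝ), (∀ a ∈ L, a ∈ Φ) ∧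
        w = L.foldr (fun a f => reflectRoot a ∘ f) id) ∧
      (∀ x ∈ Φ, 0 < dotp c x → w x ∈ Φ ∧ 0 < dotp z (w x)) ∧
      (∀ y ∈ Φ, 0 < dotp z y → ∃ x, (x ∈ Φ ∧ 0 < dotp c x) ∧ w x = y) := by
  intro d
  induction d using Nat.strong_induction_on with
  | _ d ih =>
    intro z hz hcard
    classical
    by_cases hF : (Φ.filter (fun γ => 0 < dotp c γ ∧ dotp z γ < 0)) = ∅
    · refine ⟨id, ⟨[], by simp, rfl⟩, ?_, ?_⟩
      · intro x hx hcx
        refine ⟨hx, ?_⟩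
        have hnot : ¬ (0 < dotp c x ∧ dotp z x < 0) := fun h =>
          (Finset.eq_empty_iff_forall_notMem.1 hF x (Finset.mem_filter.2 ⟨hx, h⟩))
        rcases (hz x hx).lt_or_gt with h | h
        · exact absurd ⟨hcx, h⟩ hnot
        · exact h
      · intro y hy hzy
        rcases (hc y hy).lt_or_gt with hcy | hcy
        · exfalso
          have hny : -y ∈ Φ := hRS.2.2.1 y hy
          have hnot : ¬ (0 < dotp c (-y) ∧ dotp z (-y) < 0) := fun h =>
            (Finset.eq_empty_iff_forall_notMem.1 hF (-y) (Finset.mem_filter.2 ⟨hny, h⟩))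
          rw [dotp_neg_right, dotp_neg_right] at hnot
          exact hnot ⟨by linarith, by linarith⟩
        · exact ⟨y, ⟨hy, hcy⟩, rfl⟩
    · have hδex : ∃ δ ∈ Δ, dotp z δ < 0 := by
        by_contra hno; push_neg at hno
        apply hF
        rw [Finset.eq_empty_iff_forall_notMem]
        intro γ hγf
        obtain ⟨hγΦ, hcγ, hzγ⟩ := Finset.mem_filter.1 hγf
        obtain ⟨lam, hlam, hsum⟩ := hΔgen γ hγΦ hcγ
        have h0 : 0 ≤ dotp z γ := by
          rw [hsum, dotp_sum_right]
          apply Finset.sum_nonneg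
          intro s hs
          rw [dotp_smul_right]
          exact mul_nonneg (hlam s hs) (hno s hs)
        linarith
      obtain ⟨δ, hδΔ, hzδ⟩ := hδex
      obtain ⟨hδΦ, hcδ⟩ := hΔpos δ hδΔ
      have hδ0 : δ ≠ 0 := fun h => hRS.2.1 (h ▸ hδΦ)
      have hδδ : dotp δ δ ≠ 0 := ne_of_gt (dotp_self_pos hδ0)
      set z' := reflectRoot δ z with hz'def
      have hzz' : ∀ γ, dotp z' γ = dotp z (reflectRoot δ γ) := fun γ => reflect_symm_dotp δ z γ
      have hz'gen : ∀ γ ∈ Φ, dotp z' γ ≠ 0 := fun γ hγ => by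
        rw [hzz']; exact hz _ (hRS.2.2.2.2 δ hδΦ γ hγ)
      have hmemF : δ ∈ Φ.filter (fun γ => 0 < dotp c γ ∧ dotp z γ < 0) :=
        Finset.mem_filter.2 ⟨hδΦ, hcδ, hzδ⟩
      have hinv : Function.Injective (reflectRoot δ) :=
        Function.Involutive.injective (reflect_reflect hδδ)
      have himg : Φ.filter (fun γ => 0 < dotp c γ ∧ dotp z' γ < 0)
          = ((Φ.filter (fun γ => 0 < dotp c γ ∧ dotp z γ < 0)).erase δ).image (reflectRoot δ) := by
        ext γ
        constructor
        · intro hγf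
          obtain ⟨hγΦ, hcγ, hz'γ⟩ := Finset.mem_filter.1 hγf
          rw [hzz'] at hz'γ
          have hγne : γ ≠ δ := by
            rintro rfl
            rw [reflect_self hδδ, dotp_neg_right] at hz'γ
            linarith
          have hr := simple_reflect_pos hRS hc hΔpos hΔgen hΔmin hδΔ hγΦ hcγ hγne
          refine Finset.mem_image.2 ⟨reflectRoot δ γ, Finset.mem_erase.2 ⟨?_, Finset.mem_filter.2
            ⟨hr.1, hr.2, ?_⟩⟩, reflect_reflect hδδ γ⟩
          · intro h
            have h2 : γ = -δ := by rw [← reflect_reflect hδδ γ, h, reflect_self hδδ]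
            rw [h2, dotp_neg_right] at hcγ
            linarith
          · exact hz'γ
        · intro hγi
          obtain ⟨γ', hγ'mem, rfl⟩ := Finset.mem_image.1 hγi
          obtain ⟨hγ'ne, hγ'f⟩ := Finset.mem_erase.1 hγ'mem
          obtain ⟨hγ'Φ, hcγ', hzγ'⟩ := Finset.mem_filter.1 hγ'f
          have hr := simple_reflect_pos hRS hc hΔpos hΔgen hΔmin hδΔ hγ'Φ hcγ' hγ'ne
          refine Finset.mem_filter.2 ⟨hr.1, hr.2, ?_⟩
          rw [hzz', reflect_reflect hδδ]
          exact hzγ'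
      have hcard' : (Φ.filter (fun γ => 0 < dotp c γ ∧ dotp z' γ < 0)).card = d - 1 := by
        rw [himg, Finset.card_image_of_injective _ hinv, Finset.card_erase_of_mem hmemF, hcard]
      have hdpos : 0 < d := by
        rw [← hcard]
        exact Finset.card_pos.2 ⟨δ, hmemF⟩
      obtain ⟨w', hw'W, hw'fwd, hw'srj⟩ := ih (d-1) (by omega) z' hz'gen hcard'
      refine ⟨reflectRoot δ ∘ w', ?_, ?_, ?_⟩
      · obtain ⟨L, hL, hLeq⟩ := hw'W
        refine ⟨δ :: L, ?_, ?_⟩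
        · intro a ha
          rcases List.mem_cons.1 ha with rfl | h
          · exact hδΦ
          · exact hL a h
        · rw [List.foldr_cons, ← hLeq]
      · intro x hx hcx
        obtain ⟨h1, h2⟩ := hw'fwd x hx hcx
        rw [hzz'] at h2
        exact ⟨hRS.2.2.2.2 δ hδΦ _ h1, h2⟩
      · intro y hy hzy
        have hy' : reflectRoot δ y ∈ Φ := hRS.2.2.2.2 δ hδΦ y hy
        have hzy' : 0 < dotp z' (reflectRoot δ y) := by
          rw [hzz', reflect_reflect hδδ]; exact hzy
        obtain ⟨x, hx, hwx⟩ := hw'srj _ hy' hzy'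
        refine ⟨x, hx, ?_⟩
        show reflectRoot δ (w' x) = y
        rw [hwx, reflect_reflect hδδ]

end RSaux

namespace RSaux
variable {n : ℕ}

set_option maxHeartbeats 2000000 in
/-- Every root in the plane of two incomparable positive roots lies in `±cone(α,β)`. -/
lemma claimC {Φ : Finset (Fin n → ℝ)} (hRS : IsRootSystem Φ) (hCr : IsCrystallographic Φ)
    {c : Fin n → ℝ} (hc : ∀ γ ∈ Φ, dotp c γ ≠ 0)
    {Δ : Finset (Fin n → ℝ)} (hΔgen : ∀ γ ∈ Φ, 0 < dotp c γ → InCone Δ γ)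
    {α β : Fin n → ℝ} (hαΦ : α ∈ Φ) (hcα : 0 < dotp c α) (hβΦ : β ∈ Φ) (hcβ : 0 < dotp c β)
    (hC : dotp α β ≤ 0) (hdet : 0 < dotp α α * dotp β β - dotp α β ^ 2)
    (hinc1 : ¬ InCone Δ (α - β)) (hinc2 : ¬ InCone Δ (β - α)) :
    ∀ γ ∈ Φ, Planar α β γ →
      (0 ≤ ac α β γ ∧ 0 ≤ bc α β γ) ∨ (ac α β γ ≤ 0 ∧ bc α β γ ≤ 0) := by
  classical
  have hα0 : α ≠ 0 := fun h => hRS.2.1 (h ▸ hαΦ)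
  have hβ0 : β ≠ 0 := fun h => hRS.2.1 (h ▸ hβΦ)
  have hA : 0 < dotp α α := dotp_self_pos hα0
  have hB : 0 < dotp β β := dotp_self_pos hβ0
  -- if γ = t • (α - β) with t > 0 then contradiction with incomparability
  have ending : ∀ γ ∈ Φ, ∀ t : ℝ, 0 < t → γ = t • (α - β) → False := by
    intro γ hγ t ht heq
    rcases (hc γ hγ).lt_or_gt with hcγ | hcγ
    · apply hinc2
      have hmem : -γ ∈ Φ := hRS.2.2.1 γ hγ
      have hcm : 0 < dotp c (-γ) := by rw [dotp_neg_right]; linarith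
      have h1 := incone_smul (le_of_lt (inv_pos.2 ht)) (hΔgen _ hmem hcm)
      have h3 : t⁻¹ • (-γ) = β - α := by
        rw [heq, smul_neg, smul_smul, inv_mul_cancel₀ (ne_of_gt ht), one_smul, neg_sub]
      rwa [h3] at h1
    · apply hinc1
      have h1 := incone_smul (le_of_lt (inv_pos.2 ht)) (hΔgen _ hγ hcγ)
      have h3 : t⁻¹ • γ = α - β := by
        rw [heq, smul_smul, inv_mul_cancel₀ (ne_of_gt ht), one_smul]
      rwa [h3] at h1
  -- no planar root has coordinates x > 0 > y
  have key : ∀ γ ∈ Φ, Planar α β γ → ¬(0 < ac α β γ ∧ bc α β γ < 0) := by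
    intro γ0 hγ0 hpl0 hbad0
    obtain ⟨γ, hγF, hγmin⟩ := Finset.exists_min_image
      (Φ.filter (fun γ => Planar α β γ ∧ 0 < ac α β γ ∧ bc α β γ < 0))
      (fun γ => ac α β γ - bc α β γ)
      ⟨γ0, Finset.mem_filter.2 ⟨hγ0, hpl0, hbad0⟩⟩
    obtain ⟨hγΦ, hγpl, hx', hy'⟩ := Finset.mem_filter.1 hγF
    obtain ⟨x, hxdef⟩ : ∃ x, ac α β γ = x := ⟨_, rfl⟩
    obtain ⟨y, hydef⟩ : ∃ y, bc α β γ = y := ⟨_, rfl⟩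
    obtain ⟨A, hAdef⟩ : ∃ A, dotp α α = A := ⟨_, rfl⟩
    obtain ⟨B, hBdef⟩ : ∃ B, dotp β β = B := ⟨_, rfl⟩
    obtain ⟨C, hCdef⟩ : ∃ C, dotp α β = C := ⟨_, rfl⟩
    rw [hxdef] at hx'
    rw [hydef] at hy'
    rw [hAdef] at hA
    rw [hBdef] at hB
    rw [hCdef] at hC
    have hdetABC : 0 < A * B - C ^ 2 := by rw [← hAdef, ← hBdef, ← hCdef]; exact hdet
    have hx : 0 < x := hx'
    have hy : y < 0 := hy'
    have hplγ : γ = x • α + y • β := by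
      have h1 := hγpl
      unfold Planar at h1
      rw [hxdef, hydef] at h1
      exact h1
    have hdαγ : dotp α γ = x * A + y * C := by
      rw [hplγ, dotp_add_right, dotp_smul_right, dotp_smul_right, hAdef, hCdef]
    have hdβγ : dotp β γ = x * C + y * B := by
      rw [hplγ, dotp_add_right, dotp_smul_right, dotp_smul_right, dotp_comm β α, hBdef, hCdef]
    have hyC : 0 ≤ y * C := by nlinarith [mul_nonneg (neg_nonneg.2 (le_of_lt hy)) (neg_nonneg.2 hC)]
    have hαγpos : 0 < dotp α γ := by rw [hdαγ]; nlinarith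
    have hγα : γ ≠ α := by
      intro h
      rw [h, bc_alpha hdet] at hydef
      linarith
    have hγ₁Φ : γ - α ∈ Φ := root_sub hRS hCr hγΦ hαΦ (by rwa [dotp_comm γ α]) hγα
    have hacγ₁ : ac α β (γ - α) = x - 1 := by rw [ac_sub, ac_alpha hdet, hxdef]
    have hbcγ₁ : bc α β (γ - α) = y := by rw [bc_sub, bc_alpha hdet, hydef]; ring
    have hplγ₁ : Planar α β (γ - α) := planar_sub hγpl (planar_alpha hdet)
    rcases lt_trichotomy x 1 with hx1 | hx1 | hx1
    · -- x < 1 : move to the β side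
      have hxC : x * C ≤ 0 := by nlinarith [mul_nonneg (le_of_lt hx) (neg_nonneg.2 hC)]
      have hβγneg : dotp β γ < 0 := by rw [hdβγ]; nlinarith
      have hγβ : γ ≠ -β := by
        intro h
        rw [h, ac_neg, ac_beta hdet] at hxdef
        simp at hxdef
        linarith
      have hnb : -β ∈ Φ := hRS.2.2.1 β hβΦ
      have hγ₂Φ' : γ - -β ∈ Φ := by
        refine root_sub hRS hCr hγΦ hnb ?_ hγβ
        rw [dotp_neg_right, dotp_comm γ β]
        linarith
      have hγ₂Φ : γ + β ∈ Φ := by rwa [sub_neg_eq_add] at hγ₂Φ'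
      have hacγ₂ : ac α β (γ + β) = x := by rw [ac_add, ac_beta hdet, hxdef]; ring
      have hbcγ₂ : bc α β (γ + β) = y + 1 := by rw [bc_add, bc_beta hdet, hydef]
      have hplγ₂ : Planar α β (γ + β) := planar_add hγpl (planar_beta hdet)
      rcases lt_trichotomy (y + 1) 0 with hy1 | hy1 | hy1
      · have hmem : γ + β ∈ Φ.filter (fun γ => Planar α β γ ∧ 0 < ac α β γ ∧ bc α β γ < 0) :=
          Finset.mem_filter.2 ⟨hγ₂Φ, hplγ₂, by rw [hacγ₂]; exact hx, by rw [hbcγ₂]; exact hy1⟩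
        have h5 := hγmin _ hmem
        rw [hacγ₂, hbcγ₂, hxdef, hydef] at h5
        linarith
      · have hyeq : y = -1 := by linarith
        have h2 : γ + β = x • α := by
          have h3 := hplγ₂
          unfold Planar at h3
          rw [hacγ₂, hbcγ₂, hyeq] at h3
          rw [h3]
          module
        rw [h2] at hγ₂Φ
        rcases hRS.2.2.2.1 α hαΦ x hγ₂Φ with h | h <;> linarith
      · -- terminal fractional case : integrality forces y = -x
        obtain ⟨k₁, hk₁⟩ := hCr α hαΦ γ hγΦ
        obtain ⟨k₂, hk₂⟩ := hCr β hβΦ γ hγΦ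
        obtain ⟨m₁, hm₁⟩ := hCr α hαΦ β hβΦ
        obtain ⟨m₂, hm₂⟩ := hCr β hβΦ α hαΦ
        rw [hAdef] at hk₁ hm₁
        rw [hBdef] at hk₂ hm₂
        rw [hCdef] at hm₁
        rw [dotp_comm β α, hCdef] at hm₂
        have hAne : A ≠ 0 := ne_of_gt hA
        have hBne : B ≠ 0 := ne_of_gt hB
        have e₁ : (k₁:ℝ) * A = 2 * (x * A + y * C) := by
          rw [← hdαγ, ← hk₁]; field_simp
        have e₂ : (k₂:ℝ) * B = 2 * (x * C + y * B) := by
          rw [← hdβγ, ← hk₂]; field_simp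
        have em₁ : (m₁:ℝ) * A = 2 * C := by rw [← hm₁]; field_simp
        have em₂ : (m₂:ℝ) * B = 2 * C := by rw [← hm₂]; field_simp
        have ek₁ : (k₁:ℝ) = 2 * x + y * (m₁:ℝ) := by
          apply mul_right_cancel₀ hAne
          linear_combination e₁ - y * em₁
        have ek₂ : (k₂:ℝ) = 2 * y + x * (m₂:ℝ) := by
          apply mul_right_cancel₀ hBne
          linear_combination e₂ - x * em₂
        have hk₁pos : 0 < (k₁:ℝ) := by
          rw [← hk₁]
          exact div_pos (by linarith) hA
        have hk₂neg : (k₂:ℝ) < 0 := by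
          rw [← hk₂]
          exact div_neg_of_neg_of_pos (by linarith) hB
        have hk₁1 : 1 ≤ k₁ := by exact_mod_cast hk₁pos
        have hk₂1 : k₂ ≤ -1 := by
          have h6 : k₂ < 0 := by exact_mod_cast hk₂neg
          omega
        have hm₁le : m₁ ≤ 0 := by
          have h6 : (m₁:ℝ) ≤ 0 := by nlinarith [em₁, hA, hC]
          exact_mod_cast h6
        have hm₂le : m₂ ≤ 0 := by
          have h6 : (m₂:ℝ) ≤ 0 := by nlinarith [em₂, hB, hC]
          exact_mod_cast h6
        have hCsq : C ^ 2 < A * B := by linarith [hdetABC]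
        have hmm : m₁ * m₂ ≤ 3 := by
          have h2 : ((m₁ * m₂ : ℤ):ℝ) * (A * B) = 4 * C ^ 2 := by
            push_cast
            nlinarith [em₁, em₂]
          have h3 : ((m₁ * m₂ : ℤ):ℝ) * (A * B) < 4 * (A * B) := by
            rw [h2]; nlinarith
          have h4 : ((m₁ * m₂ : ℤ):ℝ) < 4 :=
            lt_of_mul_lt_mul_right h3 (le_of_lt (mul_pos hA hB))
          have h5 : (m₁ * m₂ : ℤ) < 4 := by exact_mod_cast h4
          omega
        have hm₁m₂iff : m₁ = 0 ↔ m₂ = 0 := by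
          constructor
          · intro h
            rw [h] at em₁
            have hC0 : C = 0 := by push_cast at em₁; linarith
            have h7 : (m₂:ℝ) * B = 0 := by rw [em₂, hC0]; ring
            have h8 : (m₂:ℝ) = 0 := by
              rcases mul_eq_zero.1 h7 with h2 | h2
              · exact h2
              · exact absurd h2 hBne
            exact_mod_cast h8
          · intro h
            rw [h] at em₂
            have hC0 : C = 0 := by push_cast at em₂; linarith
            have h7 : (m₁:ℝ) * A = 0 := by rw [em₁, hC0]; ring
            have h8 : (m₁:ℝ) = 0 := by
              rcases mul_eq_zero.1 h7 with h2 | h2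
              · exact h2
              · exact absurd h2 hAne
            exact_mod_cast h8
        have hyx : y = -x := by
          by_cases hm0 : m₁ = 0
          · have hm20 : m₂ = 0 := hm₁m₂iff.1 hm0
            rw [hm0] at ek₁
            rw [hm20] at ek₂
            push_cast at ek₁ ek₂
            have h1 : (k₁:ℝ) < 2 := by rw [ek₁]; linarith
            have h2 : k₁ < 2 := by exact_mod_cast h1
            have h3 : k₁ = 1 := by omega
            have h4 : (-2:ℝ) < (k₂:ℝ) := by rw [ek₂]; linarith
            have h5 : (-2:ℤ) < k₂ := by exact_mod_cast h4
            have h6 : k₂ = -1 := by omega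
            rw [h3] at ek₁; rw [h6] at ek₂
            push_cast at ek₁ ek₂
            linarith
          · have hm20 : m₂ ≠ 0 := fun h => hm0 (hm₁m₂iff.2 h)
            have hm₁1 : m₁ ≤ -1 := by omega
            have hm₂1 : m₂ ≤ -1 := by omega
            have hm₁3 : -3 ≤ m₁ := by nlinarith
            have hm₂3 : -3 ≤ m₂ := by nlinarith
            interval_cases m₁ <;> interval_cases m₂ <;> push_cast at ek₁ ek₂ <;>
              first
              | (exfalso; omega)
              | (have hb1 : (k₁:ℝ) < 3 := by linarith
                 have hb2 : (-3:ℝ) < (k₂:ℝ) := by linarith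
                 have hb1' : k₁ < 3 := by exact_mod_cast hb1
                 have hb2' : (-3:ℤ) < k₂ := by exact_mod_cast hb2
                 have hk1or : k₁ = 1 ∨ k₁ = 2 := by omega
                 have hk2or : k₂ = -1 ∨ k₂ = -2 := by omega
                 rcases hk1or with h | h <;> rcases hk2or with h' | h' <;>
                   (rw [h] at ek₁; rw [h'] at ek₂; push_cast at ek₁ ek₂; linarith))
              | (exfalso
                 first
                 | (have hyint : ((k₁ + k₂ : ℤ):ℝ) = y := by push_cast; linarith
                    have h1 : (k₁ + k₂ : ℤ) < 0 := by
                      have h9 : ((k₁ + k₂:ℤ):ℝ) < 0 := by rw [hyint]; linarith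
                      exact_mod_cast h9
                    have h2 : (-1:ℤ) < (k₁ + k₂ : ℤ) := by
                      have h9 : (-1:ℝ) < ((k₁ + k₂:ℤ):ℝ) := by rw [hyint]; linarith
                      exact_mod_cast h9
                    omega)
                 | (have hxint : ((k₁ + k₂ : ℤ):ℝ) = x := by push_cast; linarith
                    have h1 : (0:ℤ) < (k₁ + k₂ : ℤ) := by
                      have h9 : (0:ℝ) < ((k₁ + k₂:ℤ):ℝ) := by rw [hxint]; linarith
                      exact_mod_cast h9
                    have h2 : (k₁ + k₂ : ℤ) < 1 := by
                      have h9 : ((k₁ + k₂:ℤ):ℝ) < 1 := by rw [hxint]; linarith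
                      exact_mod_cast h9
                    omega)
                 | (have hxint : ((2*k₁ + k₂ : ℤ):ℝ) = x := by push_cast; linarith
                    have h1 : (0:ℤ) < (2*k₁ + k₂ : ℤ) := by
                      have h9 : (0:ℝ) < ((2*k₁ + k₂:ℤ):ℝ) := by rw [hxint]; linarith
                      exact_mod_cast h9
                    have h2 : (2*k₁ + k₂ : ℤ) < 1 := by
                      have h9 : ((2*k₁ + k₂:ℤ):ℝ) < 1 := by rw [hxint]; linarith
                      exact_mod_cast h9
                    omega)
                 | (have hyint : ((k₁ + 2*k₂ : ℤ):ℝ) = y := by push_cast; linarith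
                    have h1 : (k₁ + 2*k₂ : ℤ) < 0 := by
                      have h9 : ((k₁ + 2*k₂:ℤ):ℝ) < 0 := by rw [hyint]; linarith
                      exact_mod_cast h9
                    have h2 : (-1:ℤ) < (k₁ + 2*k₂ : ℤ) := by
                      have h9 : (-1:ℝ) < ((k₁ + 2*k₂:ℤ):ℝ) := by rw [hyint]; linarith
                      exact_mod_cast h9
                    omega))
        have hfin : γ = x • (α - β) := by
          rw [hplγ, hyx]
          module
        exact ending γ hγΦ x hx hfin
    · -- x = 1 : γ - α = y • β forces y = -1, so γ = α - β
      have h2 : γ - α = y • β := by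
        have h3 := hplγ₁
        unfold Planar at h3
        rw [hacγ₁, hbcγ₁, hx1] at h3
        rw [h3]
        module
      rw [h2] at hγ₁Φ
      rcases hRS.2.2.2.1 β hβΦ y hγ₁Φ with h | h
      · linarith
      · have hfin : γ = (1:ℝ) • (α - β) := by
          rw [hplγ, hx1, h]
          module
        exact ending γ hγΦ 1 one_pos hfin
    · -- x > 1 : descent via γ - α
      have hmem : γ - α ∈ Φ.filter (fun γ => Planar α β γ ∧ 0 < ac α β γ ∧ bc α β γ < 0) :=
        Finset.mem_filter.2 ⟨hγ₁Φ, hplγ₁, by rw [hacγ₁]; linarith, by rw [hbcγ₁]; exact hy⟩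
      have h5 := hγmin _ hmem
      rw [hacγ₁, hbcγ₁, hxdef, hydef] at h5
      linarith
  -- assemble the sign dichotomy
  intro γ hγ hpl
  have h1 := key γ hγ hpl
  have h2 : ¬(ac α β γ < 0 ∧ 0 < bc α β γ) := by
    intro hbad
    have hneg : -γ ∈ Φ := hRS.2.2.1 γ hγ
    have hplneg : Planar α β (-γ) := planar_neg hpl
    apply key (-γ) hneg hplneg
    rw [ac_neg, bc_neg]
    constructor <;> linarith [hbad.1, hbad.2]
  rcases le_or_gt 0 (ac α β γ) with ha | ha
  · rcases le_or_gt 0 (bc α β γ) with hb | hb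
    · exact Or.inl ⟨ha, hb⟩
    · rcases eq_or_lt_of_le ha with haeq | halt
      · exact Or.inr ⟨le_of_eq haeq.symm, le_of_lt hb⟩
      · exact absurd ⟨halt, hb⟩ h1
  · rcases le_or_gt (bc α β γ) 0 with hb | hb
    · exact Or.inr ⟨le_of_lt ha, hb⟩
    · exact absurd ⟨ha, hb⟩ h2

end RSaux

namespace RSaux
variable {n : ℕ}

/-- sign of a perturbed quantity. -/
lemma pert_sign {a b ε : ℝ} (hε : 0 < ε) (h : ε * |b| < |a|) :
    (0 < a + ε * b ↔ 0 < a) ∧ a + ε * b ≠ 0 := by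
  have h1 : ε * b ≤ ε * |b| := mul_le_mul_of_nonneg_left (le_abs_self b) hε.le
  have h2 : -(ε * |b|) ≤ ε * b := by
    have := mul_le_mul_of_nonneg_left (neg_abs_le b) hε.le
    linarith
  rcases lt_trichotomy a 0 with ha | ha | ha
  · rw [abs_of_neg ha] at h
    constructor
    · constructor <;> intro hh <;> linarith
    · intro hh; linarith
  · rw [ha] at h
    simp at h
    linarith [abs_nonneg b, mul_nonneg hε.le (abs_nonneg b)]
  · rw [abs_of_pos ha] at h
    constructor
    · constructor <;> intro hh <;> linarith
    · intro hh; linarith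

/-- a functional vanishing on the plane and nonzero on a given finite set of
non-planar vectors. -/
lemma exists_eta {α β : Fin n → ℝ} (hdet : 0 < dotp α α * dotp β β - dotp α β ^ 2)
    (F : Finset (Fin n → ℝ)) (hF : ∀ γ ∈ F, ¬ Planar α β γ) :
    ∃ η, dotp η α = 0 ∧ dotp η β = 0 ∧ ∀ γ ∈ F, dotp η γ ≠ 0 := by
  classical
  induction F using Finset.induction_on with
  | empty => exact ⟨0, by simp [dotp], by simp [dotp], by simp⟩
  | @insert v F' hvF ih =>
    obtain ⟨η, hηα, hηβ, hηF⟩ := ih (fun γ hγ => hF γ (Finset.mem_insert_of_mem hγ))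
    have hv : ¬ Planar α β v := hF v (Finset.mem_insert_self v F')
    set η' := v - (ac α β v • α + bc α β v • β) with hη'def
    have hη'α : dotp η' α = 0 := by
      rw [hη'def, dotp_sub_left, dotp_proj_alpha hdet, sub_self]
    have hη'β : dotp η' β = 0 := by
      rw [hη'def, dotp_sub_left, dotp_proj_beta hdet, sub_self]
    have hη'0 : η' ≠ 0 := by
      intro h
      apply hv
      unfold Planar
      rw [hη'def] at h
      have := sub_eq_zero.1 h
      exact this
    have hη'v : 0 < dotp η' v := by
      have hsplit : v = η' + (ac α β v • α + bc α β v • β) := by rw [hη'def]; abel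
      have h2 : dotp η' v = dotp η' η' + dotp η' (ac α β v • α + bc α β v • β) := by
        conv_lhs => rw [hsplit]
        rw [dotp_add_right]
      have h3 : dotp η' (ac α β v • α + bc α β v • β) = 0 := by
        rw [dotp_add_right, dotp_smul_right, dotp_smul_right, hη'α, hη'β]
        ring
      rw [h2, h3, add_zero]
      exact dotp_self_pos hη'0
    obtain ⟨t, ht⟩ := Infinite.exists_notMem_finset
      (insert (0:ℝ) ((insert v F').image (fun γ => - dotp η γ / dotp η' γ)))
    refine ⟨η + t • η', ?_, ?_, ?_⟩
    · rw [dotp_add_left, dotp_smul_left, hηα, hη'α]; ring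
    · rw [dotp_add_left, dotp_smul_left, hηβ, hη'β]; ring
    · intro γ hγ
      have hval : dotp (η + t • η') γ = dotp η γ + t * dotp η' γ := by
        rw [dotp_add_left, dotp_smul_left]
      by_cases hz : dotp η' γ = 0
      · have hγv : γ ≠ v := by
          intro h
          rw [h] at hz
          exact (ne_of_gt hη'v) hz
        have hγF' : γ ∈ F' := by
          rcases Finset.mem_insert.1 hγ with h | h
          · exact absurd h hγv
          · exact h
        rw [hval, hz, mul_zero, add_zero]
        exact hηF γ hγF'
      · rw [hval]
        intro h0
        apply ht
        refine Finset.mem_insert_of_mem (Finset.mem_image.2 ⟨γ, hγ, ?_⟩)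
        field_simp
        linarith

end RSaux

open RSaux in
/-- Theorem: for incomparable positive roots `α, β` of an irreducible
crystallographic root system there is a Weyl group element `w` with `wΔ ∩ Φ⁺ = {α, β}`. -/
theorem statement16 {n : ℕ} (Φ : Finset (Fin n → ℝ))
    (hRS : IsRootSystem Φ) (hCr : IsCrystallographic Φ) (hIrr : IsIrreducibleRS Φ)
    (c : Fin n → ℝ) (hc : ∀ α ∈ Φ, dotp c α ≠ 0)
    (Φpos : Set (Fin n → ℝ)) (hpos : Φpos = {α | α ∈ Φ ∧ 0 < dotp c α})
    (Δ : Finset (Fin n → ℝ))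
    (hΔpos : (Δ : Set (Fin n → ℝ)) ⊆ Φpos)
    (hΔgen : ∀ γ ∈ Φpos, InCone Δ γ)
    (hΔmin : ∀ Δ' : Finset (Fin n → ℝ), (Δ' : Set (Fin n → ℝ)) ⊆ Φpos →
      (∀ γ ∈ Φpos, InCone Δ' γ) → Δ ⊆ Δ')
    (α β : Fin n → ℝ) (hα : α ∈ Φpos) (hβ : β ∈ Φpos)
    (hinc : ¬ InCone Δ (α - β) ∧ ¬ InCone Δ (β - α)) :
    ∃ w : (Fin n → ℝ) → (Fin n → ℝ), InWeylGroup Φ w ∧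
      (w '' (Δ : Set (Fin n → ℝ))) ∩ Φpos = {α, β} := by
  classical
  subst hpos
  obtain ⟨hΦne, hΦ0, hnegmem, hscal, hreflmem⟩ := hRS
  have hRS' : IsRootSystem Φ := ⟨hΦne, hΦ0, hnegmem, hscal, hreflmem⟩
  have hαΦ : α ∈ Φ := hα.1
  have hcα : 0 < dotp c α := hα.2
  have hβΦ : β ∈ Φ := hβ.1
  have hcβ : 0 < dotp c β := hβ.2
  have hα0 : α ≠ 0 := fun h => hΦ0 (h ▸ hαΦ)
  have hβ0 : β ≠ 0 := fun h => hΦ0 (h ▸ hβΦ)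
  have hA : 0 < dotp α α := dotp_self_pos hα0
  have hB : 0 < dotp β β := dotp_self_pos hβ0
  have hΔpos' : ∀ δ ∈ Δ, δ ∈ Φ ∧ 0 < dotp c δ := by
    intro δ hδ
    have := hΔpos (Finset.mem_coe.2 hδ)
    exact ⟨this.1, this.2⟩
  have hΔgen' : ∀ γ ∈ Φ, 0 < dotp c γ → InCone Δ γ := fun γ h1 h2 => hΔgen γ ⟨h1, h2⟩
  have hΔmin' : ∀ Δ' : Finset (Fin n → ℝ), (∀ δ ∈ Δ', δ ∈ Φ ∧ 0 < dotp c δ) →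
      (∀ γ ∈ Φ, 0 < dotp c γ → InCone Δ' γ) → Δ ⊆ Δ' := by
    intro Δ' h1 h2
    exact hΔmin Δ' (fun δ hδ => h1 δ (Finset.mem_coe.1 hδ)) (fun γ hγ => h2 γ hγ.1 hγ.2)
  have hαβ : α ≠ β := by
    intro h
    apply hinc.1
    rw [h, sub_self]
    exact incone_zero Δ
  have hC : dotp α β ≤ 0 := by
    by_contra hCpos
    push_neg at hCpos
    have hsub : α - β ∈ Φ := root_sub hRS' hCr hαΦ hβΦ hCpos hαβ
    rcases (hc _ hsub).lt_or_gt with hneg | hpos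
    · apply hinc.2
      have hm : β - α ∈ Φ := by
        have := hnegmem _ hsub
        rwa [neg_sub] at this
      have hcm : 0 < dotp c (β - α) := by
        have h3 : dotp c (β - α) = - dotp c (α - β) := by
          rw [dotp_sub_right, dotp_sub_right]; ring
        rw [h3]; linarith
      exact hΔgen' _ hm hcm
    · exact hinc.1 (hΔgen' _ hsub hpos)
  have hindvec : dotp β β • α - dotp α β • β ≠ 0 := by
    intro h
    by_cases hC0 : dotp α β = 0
    · rw [hC0, zero_smul, sub_zero] at h
      rcases smul_eq_zero.1 h with h1 | h1
      · exact (ne_of_gt hB) h1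
      · exact hα0 h1
    · have hBα : dotp β β • α = dotp α β • β := by
        have := sub_eq_zero.1 h
        exact this
      have hαeq : α = (dotp α β / dotp β β) • β := by
        have h1 : (dotp β β)⁻¹ • (dotp β β • α) = (dotp β β)⁻¹ • (dotp α β • β) := by rw [hBα]
        rw [smul_smul, inv_mul_cancel₀ (ne_of_gt hB), one_smul, smul_smul] at h1
        rw [div_eq_inv_mul]
        exact h1
      have hmem : (dotp α β / dotp β β) • β ∈ Φ := by rw [← hαeq]; exact hαΦ
      rcases hscal β hβΦ _ hmem with h1 | h1
      · have : dotp α β = dotp β β := by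
          field_simp at h1
          linarith
        linarith
      · have hαβ' : α = -β := by
          rw [hαeq, h1, neg_one_smul]
        rw [hαβ', dotp_neg_right] at hcα
        linarith
  have hdet : 0 < dotp α α * dotp β β - dotp α β ^ 2 := by
    have := dotp_cs_strict hβ0 hindvec
    linarith
  have hCC := claimC hRS' hCr hc hΔgen' hαΦ hcα hβΦ hcβ hC hdet hinc.1 hinc.2
  -- minimum positive c-value
  obtain ⟨mc, hmc0, hmcle⟩ : ∃ mc : ℝ, 0 < mc ∧ ∀ γ ∈ Φ, 0 < dotp c γ → mc ≤ dotp c γ := by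
    have hne : ((Φ.filter (fun γ => 0 < dotp c γ)).image (dotp c)).Nonempty :=
      ⟨dotp c α, Finset.mem_image_of_mem _ (Finset.mem_filter.2 ⟨hαΦ, hcα⟩)⟩
    refine ⟨((Φ.filter (fun γ => 0 < dotp c γ)).image (dotp c)).min' hne, ?_, ?_⟩
    · obtain ⟨γ, hγ, heq⟩ := Finset.mem_image.1 (Finset.min'_mem _ hne)
      rw [← heq]
      exact (Finset.mem_filter.1 hγ).2
    · intro γ hγ hcγ
      exact Finset.min'_le _ _ (Finset.mem_image_of_mem _ (Finset.mem_filter.2 ⟨hγ, hcγ⟩))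
  -- generic functional on nonplanar roots
  obtain ⟨η, hηα, hηβ, hηgen⟩ := exists_eta hdet (Φ.filter (fun γ => ¬ Planar α β γ))
    (fun γ hγ => (Finset.mem_filter.1 hγ).2)
  have hηgen' : ∀ γ ∈ Φ, ¬ Planar α β γ → dotp η γ ≠ 0 :=
    fun γ hγ hnp => hηgen γ (Finset.mem_filter.2 ⟨hγ, hnp⟩)
  -- the base functional z₁ = proj c - c
  obtain ⟨z₁, hz₁def⟩ : ∃ v, (ac α β c • α + bc α β c • β) - c = v := ⟨_, rfl⟩
  have hz₁α : dotp z₁ α = 0 := by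
    rw [← hz₁def, dotp_sub_left, dotp_proj_alpha hdet, sub_self]
  have hz₁β : dotp z₁ β = 0 := by
    rw [← hz₁def, dotp_sub_left, dotp_proj_beta hdet, sub_self]
  have hz₁bound : ∀ γ ∈ Φ, 0 < dotp c γ → dotp γ α ≤ 0 → dotp γ β ≤ 0 →
      dotp z₁ γ ≤ - dotp c γ := by
    intro γ hγ hcγ h1 h2
    have h1' : dotp α γ ≤ 0 := by rwa [dotp_comm α γ]
    have h2' : dotp β γ ≤ 0 := by rwa [dotp_comm β γ]
    have hga : ac α β γ ≤ 0 := by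
      unfold ac
      apply div_nonpos_of_nonpos_of_nonneg _ hdet.le
      nlinarith [mul_nonneg hB.le (neg_nonneg.2 h1'),
        mul_nonneg (neg_nonneg.2 hC) (neg_nonneg.2 h2')]
    have hgb : bc α β γ ≤ 0 := by
      unfold bc
      apply div_nonpos_of_nonpos_of_nonneg _ hdet.le
      nlinarith [mul_nonneg hA.le (neg_nonneg.2 h2'),
        mul_nonneg (neg_nonneg.2 hC) (neg_nonneg.2 h1')]
    have hsymm := dotp_proj_symm hdet c γ
    have hval : dotp z₁ γ = dotp c (ac α β γ • α + bc α β γ • β) - dotp c γ := by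
      rw [← hz₁def, dotp_sub_left, hsymm]
    have hproj_le : dotp c (ac α β γ • α + bc α β γ • β) ≤ 0 := by
      rw [dotp_add_right, dotp_smul_right, dotp_smul_right]
      nlinarith [mul_nonneg (neg_nonneg.2 hga) hcα.le, mul_nonneg (neg_nonneg.2 hgb) hcβ.le]
    linarith
  -- first perturbation
  obtain ⟨ε₁, hε₁0, hε₁1, hε₁⟩ := exists_eps Φ η
    (fun γ => if dotp z₁ γ = 0 then mc/4 else min (|dotp z₁ γ|/2) (mc/4))
    (by
      intro γ hγ
      split_ifs with h
      · linarith
      · exact lt_min (by positivity) (by linarith))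
  have hε₁mc : ∀ γ ∈ Φ, ε₁ * |dotp η γ| < mc/4 := by
    intro γ hγ
    refine lt_of_lt_of_le (hε₁ γ hγ) ?_
    split_ifs with h
    · exact le_refl _
    · exact min_le_right _ _
  have hε₁z : ∀ γ ∈ Φ, dotp z₁ γ ≠ 0 → ε₁ * |dotp η γ| < |dotp z₁ γ| := by
    intro γ hγ h
    refine lt_of_lt_of_le (hε₁ γ hγ) ?_
    rw [if_neg h]
    exact le_trans (min_le_left _ _) (half_le_self (abs_nonneg _))
  obtain ⟨z₀, hz₀def⟩ : ∃ v, z₁ + ε₁ • η = v := ⟨_, rfl⟩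
  have hz₀val : ∀ γ, dotp z₀ γ = dotp z₁ γ + ε₁ * dotp η γ := by
    intro γ
    rw [← hz₀def, dotp_add_left, dotp_smul_left]
  have hz₀α : dotp z₀ α = 0 := by rw [hz₀val, hz₁α, hηα]; ring
  have hz₀β : dotp z₀ β = 0 := by rw [hz₀val, hz₁β, hηβ]; ring
  have hz₀planar0 : ∀ γ, Planar α β γ → dotp z₀ γ = 0 := by
    intro γ hpl
    have h1 : dotp z₀ γ = dotp z₀ (ac α β γ • α + bc α β γ • β) := by rw [← hpl]
    rw [h1, dotp_add_right, dotp_smul_right, dotp_smul_right, hz₀α, hz₀β]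
    ring
  have hz₀ne : ∀ γ ∈ Φ, ¬ Planar α β γ → dotp z₀ γ ≠ 0 := by
    intro γ hγ hnpl
    by_cases h : dotp z₁ γ = 0
    · rw [hz₀val, h, zero_add]
      intro h0
      rcases mul_eq_zero.1 h0 with h1 | h1
      · exact (ne_of_gt hε₁0) h1
      · exact (hηgen' γ hγ hnpl) h1
    · rw [hz₀val]
      exact (pert_sign hε₁0 (hε₁z γ hγ h)).2
  -- second perturbation
  obtain ⟨ε₂, hε₂0, hε₂1, hε₂⟩ := exists_eps Φ c
    (fun γ => if dotp z₀ γ = 0 then mc/4 else min (|dotp z₀ γ|/2) (mc/4))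
    (by
      intro γ hγ
      split_ifs with h
      · linarith
      · exact lt_min (by positivity) (by linarith))
  have hε₂mc : ∀ γ ∈ Φ, ε₂ * |dotp c γ| < mc/4 := by
    intro γ hγ
    refine lt_of_lt_of_le (hε₂ γ hγ) ?_
    split_ifs with h
    · exact le_refl _
    · exact min_le_right _ _
  have hε₂z : ∀ γ ∈ Φ, dotp z₀ γ ≠ 0 → ε₂ * |dotp c γ| < |dotp z₀ γ| := by
    intro γ hγ h
    refine lt_of_lt_of_le (hε₂ γ hγ) ?_
    rw [if_neg h]
    exact le_trans (min_le_left _ _) (half_le_self (abs_nonneg _))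
  obtain ⟨z, hzdef⟩ : ∃ v, z₀ + ε₂ • c = v := ⟨_, rfl⟩
  have hzval : ∀ γ, dotp z γ = dotp z₀ γ + ε₂ * dotp c γ := by
    intro γ
    rw [← hzdef, dotp_add_left, dotp_smul_left]
  have hzplanarval : ∀ γ, Planar α β γ → dotp z γ = ε₂ * dotp c γ := by
    intro γ hpl
    rw [hzval, hz₀planar0 γ hpl, zero_add]
  have hziff : ∀ γ ∈ Φ, ¬ Planar α β γ → (0 < dotp z γ ↔ 0 < dotp z₀ γ) := by
    intro γ hγ hnpl
    rw [hzval]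
    exact (pert_sign hε₂0 (hε₂z γ hγ (hz₀ne γ hγ hnpl))).1
  have hzgen : ∀ γ ∈ Φ, dotp z γ ≠ 0 := by
    intro γ hγ
    by_cases hpl : Planar α β γ
    · rw [hzplanarval γ hpl]
      exact mul_ne_zero (ne_of_gt hε₂0) (hc γ hγ)
    · rw [hzval]
      exact (pert_sign hε₂0 (hε₂z γ hγ (hz₀ne γ hγ hpl))).2
  have hzneg : ∀ γ ∈ Φ, 0 < dotp c γ → dotp γ α ≤ 0 → dotp γ β ≤ 0 → dotp z γ < 0 := by
    intro γ hγ hcγ h1 h2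
    have e0 := hz₁bound γ hγ hcγ h1 h2
    have e1 : ε₁ * dotp η γ ≤ ε₁ * |dotp η γ| :=
      mul_le_mul_of_nonneg_left (le_abs_self _) hε₁0.le
    have e2 : ε₂ * dotp c γ ≤ ε₂ * |dotp c γ| :=
      mul_le_mul_of_nonneg_left (le_abs_self _) hε₂0.le
    have e3 := hε₁mc γ hγ
    have e4 := hε₂mc γ hγ
    have e5 := hmcle γ hγ hcγ
    rw [hzval, hz₀val]
    linarith
  have hzα : 0 < dotp z α := by
    rw [hzplanarval α (planar_alpha hdet)]
    exact mul_pos hε₂0 hcα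
  have hzβ : 0 < dotp z β := by
    rw [hzplanarval β (planar_beta hdet)]
    exact mul_pos hε₂0 hcβ
  -- planar roots in the z-positive system have nonnegative coordinates
  have hplP : ∀ s ∈ Φ, 0 < dotp z s → Planar α β s → 0 ≤ ac α β s ∧ 0 ≤ bc α β s := by
    intro s hsΦ hzs hpl
    rcases hCC s hsΦ hpl with h | ⟨ha, hb⟩
    · exact h
    · exfalso
      have hcs : dotp c s = ac α β s * dotp c α + bc α β s * dotp c β := by
        have h1 : dotp c s = dotp c (ac α β s • α + bc α β s • β) := by rw [← hpl]
        rw [h1, dotp_add_right, dotp_smul_right, dotp_smul_right]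
      have hzs2 : dotp z s = ε₂ * dotp c s := hzplanarval s hpl
      have hcs0 : dotp c s ≤ 0 := by
        rw [hcs]
        nlinarith [mul_nonneg (neg_nonneg.2 ha) hcα.le, mul_nonneg (neg_nonneg.2 hb) hcβ.le]
      have : ε₂ * dotp c s ≤ 0 := by nlinarith
      linarith
  have hsα : ∀ s ∈ Φ, Planar α β s → bc α β s = 0 → 0 ≤ ac α β s → s = α := by
    intro s hsΦ hpl hb0 ha
    have h1 : s = ac α β s • α := by
      have h2 := hpl
      unfold Planar at h2
      rw [hb0, zero_smul, add_zero] at h2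
      exact h2
    have h3 : ac α β s • α ∈ Φ := by rw [← h1]; exact hsΦ
    rcases hscal α hαΦ _ h3 with h4 | h4
    · rw [h1, h4, one_smul]
    · exfalso; rw [h4] at ha; linarith
  have hsβ : ∀ s ∈ Φ, Planar α β s → ac α β s = 0 → 0 ≤ bc α β s → s = β := by
    intro s hsΦ hpl ha0 hb
    have h1 : s = bc α β s • β := by
      have h2 := hpl
      unfold Planar at h2
      rw [ha0, zero_smul, zero_add] at h2
      exact h2
    have h3 : bc α β s • β ∈ Φ := by rw [← h1]; exact hsΦ
    rcases hscal β hβΦ _ h3 with h4 | h4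
    · rw [h1, h4, one_smul]
    · exfalso; rw [h4] at hb; linarith
  -- α and β are extreme in the z-positive system
  have hR2core : ∀ ξ, ξ ∈ Φ → ξ ≠ 0 → dotp z₀ ξ = 0 →
      ∀ φ : (Fin n → ℝ) → ℝ,
      (∀ (S : Finset (Fin n → ℝ)) (f : (Fin n → ℝ) → ℝ),
        φ (∑ s ∈ S, f s • s) = ∑ s ∈ S, f s * φ s) →
      φ ξ = 0 →
      (∀ s ∈ Φ, 0 < dotp z s → Planar α β s → s ≠ ξ → 0 < φ s) →
      ¬ InCone ((Φ.filter (fun x => 0 < dotp z x)).erase ξ) ξ := by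
    intro ξ hξΦ hξ0 hz₀ξ φ hφsum hφξ hφpos
    rintro ⟨lam, hlam, hsum⟩
    have hsum0 : ∑ s ∈ (Φ.filter (fun x => 0 < dotp z x)).erase ξ, lam s * dotp z₀ s = 0 := by
      have h1 := congrArg (dotp z₀) hsum
      rw [dotp_sum_right, hz₀ξ] at h1
      calc ∑ s ∈ (Φ.filter (fun x => 0 < dotp z x)).erase ξ, lam s * dotp z₀ s
          = ∑ s ∈ (Φ.filter (fun x => 0 < dotp z x)).erase ξ, dotp z₀ (lam s • s) :=
            Finset.sum_congr rfl fun s _ => (dotp_smul_right _ _ _).symm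
        _ = 0 := h1.symm
    have hterms : ∀ s ∈ (Φ.filter (fun x => 0 < dotp z x)).erase ξ, 0 ≤ lam s * dotp z₀ s := by
      intro s hs
      obtain ⟨hsne, hsP⟩ := Finset.mem_erase.1 hs
      obtain ⟨hsΦ, hzs⟩ := Finset.mem_filter.1 hsP
      by_cases hpl : Planar α β s
      · rw [hz₀planar0 s hpl, mul_zero]
      · exact mul_nonneg (hlam s hs) ((hziff s hsΦ hpl).1 hzs).le
    have hzero := (Finset.sum_eq_zero_iff_of_nonneg hterms).1 hsum0
    have hφ0 : ∑ s ∈ (Φ.filter (fun x => 0 < dotp z x)).erase ξ, lam s * φ s = 0 := by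
      have h1 := congrArg φ hsum
      rw [hφsum, hφξ] at h1
      exact h1.symm
    by_cases hex : ∃ s ∈ (Φ.filter (fun x => 0 < dotp z x)).erase ξ, lam s ≠ 0
    · obtain ⟨s₀, hs₀, hlam₀⟩ := hex
      have hkey : ∀ s ∈ (Φ.filter (fun x => 0 < dotp z x)).erase ξ, lam s ≠ 0 → 0 < φ s := by
        intro s hs hl
        obtain ⟨hsne, hsP⟩ := Finset.mem_erase.1 hs
        obtain ⟨hsΦ, hzs⟩ := Finset.mem_filter.1 hsP
        have hz₀s : dotp z₀ s = 0 := by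
          rcases mul_eq_zero.1 (hzero s hs) with h | h
          · exact absurd h hl
          · exact h
        have hpl : Planar α β s := by
          by_contra hnpl
          exact (hz₀ne s hsΦ hnpl) hz₀s
        exact hφpos s hsΦ hzs hpl hsne
      have hpos : 0 < ∑ s ∈ (Φ.filter (fun x => 0 < dotp z x)).erase ξ, lam s * φ s := by
        apply Finset.sum_pos'
        · intro s hs
          by_cases hl : lam s = 0
          · rw [hl, zero_mul]
          · exact (mul_pos (lt_of_le_of_ne (hlam s hs) (Ne.symm hl)) (hkey s hs hl)).le
        · exact ⟨s₀, hs₀, mul_pos (lt_of_le_of_ne (hlam s₀ hs₀) (Ne.symm hlam₀))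
            (hkey s₀ hs₀ hlam₀)⟩
      linarith
    · push_neg at hex
      apply hξ0
      rw [hsum]
      apply Finset.sum_eq_zero
      intro s hs
      rw [hex s hs, zero_smul]
  have hR2α : ¬ InCone ((Φ.filter (fun x => 0 < dotp z x)).erase α) α := by
    apply hR2core α hαΦ hα0 hz₀α (bc α β) (fun S f => bc_sum S f) (bc_alpha hdet)
    intro s hsΦ hzs hpl hsne
    obtain ⟨ha, hb⟩ := hplP s hsΦ hzs hpl
    rcases eq_or_lt_of_le hb with h | h
    · exact absurd (hsα s hsΦ hpl h.symm ha) hsne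
    · exact h
  have hR2β : ¬ InCone ((Φ.filter (fun x => 0 < dotp z x)).erase β) β := by
    apply hR2core β hβΦ hβ0 hz₀β (ac α β) (fun S f => ac_sum S f) (ac_beta hdet)
    intro s hsΦ hzs hpl hsne
    obtain ⟨ha, hb⟩ := hplP s hsΦ hzs hpl
    rcases eq_or_lt_of_le ha with h | h
    · exact absurd (hsβ s hsΦ hpl h.symm hb) hsne
    · exact h
  -- every other z- and c-positive root is decomposable
  have hR3 : ∀ γ ∈ Φ, 0 < dotp z γ → 0 < dotp c γ → γ ≠ α → γ ≠ β →
      InCone ((Φ.filter (fun x => 0 < dotp z x)).erase γ) γ := by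
    intro γ hγΦ hzγ hcγ hγα hγβ
    have hγ0 : γ ≠ 0 := fun h => hΦ0 (h ▸ hγΦ)
    by_cases hpl : Planar α β γ
    · obtain ⟨ha, hb⟩ := hplP γ hγΦ hzγ hpl
      have ha' : 0 < ac α β γ := by
        rcases eq_or_lt_of_le ha with h | h
        · exact absurd (hsβ γ hγΦ hpl h.symm hb) hγβ
        · exact h
      have hb' : 0 < bc α β γ := by
        rcases eq_or_lt_of_le hb with h | h
        · exact absurd (hsα γ hγΦ hpl h.symm ha) hγα
        · exact h
      have hmα : α ∈ (Φ.filter (fun x => 0 < dotp z x)).erase γ :=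
        Finset.mem_erase.2 ⟨Ne.symm hγα, Finset.mem_filter.2 ⟨hαΦ, hzα⟩⟩
      have hmβ : β ∈ (Φ.filter (fun x => 0 < dotp z x)).erase γ :=
        Finset.mem_erase.2 ⟨Ne.symm hγβ, Finset.mem_filter.2 ⟨hβΦ, hzβ⟩⟩
      have h1 := incone_pair hmα hmβ hαβ ha'.le hb'.le
      rwa [← hpl] at h1
    · by_cases h1 : 0 < dotp γ α
      · have hsub : γ - α ∈ Φ := root_sub hRS' hCr hγΦ hαΦ h1 hγα
        rcases (hzgen _ hsub).lt_or_gt with hneg | hpos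
        · exfalso
          apply hR2α
          have hm1 : α - γ ∈ Φ := by
            have h2 := hnegmem _ hsub
            rwa [neg_sub] at h2
          have hz1 : 0 < dotp z (α - γ) := by
            have h3 : dotp z (α - γ) = - dotp z (γ - α) := by
              rw [dotp_sub_right, dotp_sub_right]; ring
            rw [h3]; linarith
          have hne1 : α - γ ≠ γ := by
            intro h
            have h4 : α = (2:ℝ) • γ := by
              have h5 := sub_eq_iff_eq_add.1 h
              rw [h5, two_smul]
            have h6 : (2:ℝ) • γ ∈ Φ := by rw [← h4]; exact hαΦ
            rcases hscal γ hγΦ 2 h6 with h5 | h5 <;> norm_num at h5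
          have hma : α - γ ∈ (Φ.filter (fun x => 0 < dotp z x)).erase α :=
            Finset.mem_erase.2 ⟨fun h => hγ0 (sub_eq_self.1 h),
              Finset.mem_filter.2 ⟨hm1, hz1⟩⟩
          have hmg : γ ∈ (Φ.filter (fun x => 0 < dotp z x)).erase α :=
            Finset.mem_erase.2 ⟨hγα, Finset.mem_filter.2 ⟨hγΦ, hzγ⟩⟩
          have h6 := incone_pair hma hmg hne1 zero_le_one zero_le_one
          have h7 : (1:ℝ) • (α - γ) + (1:ℝ) • γ = α := by module
          rwa [h7] at h6
        · have hne2 : γ - α ≠ α := by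
            intro h
            have h4 : γ = (2:ℝ) • α := by
              have h5 := sub_eq_iff_eq_add.1 h
              rw [h5, two_smul]
            have h6 : (2:ℝ) • α ∈ Φ := by rw [← h4]; exact hγΦ
            rcases hscal α hαΦ 2 h6 with h5 | h5 <;> norm_num at h5
          have hma : γ - α ∈ (Φ.filter (fun x => 0 < dotp z x)).erase γ :=
            Finset.mem_erase.2 ⟨fun h => hα0 (sub_eq_self.1 h),
              Finset.mem_filter.2 ⟨hsub, hpos⟩⟩
          have hmb : α ∈ (Φ.filter (fun x => 0 < dotp z x)).erase γ :=
            Finset.mem_erase.2 ⟨Ne.symm hγα, Finset.mem_filter.2 ⟨hαΦ, hzα⟩⟩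
          have h6 := incone_pair hma hmb hne2 zero_le_one zero_le_one
          have h7 : (1:ℝ) • (γ - α) + (1:ℝ) • α = γ := by module
          rwa [h7] at h6
      · by_cases h2 : 0 < dotp γ β
        · have hsub : γ - β ∈ Φ := root_sub hRS' hCr hγΦ hβΦ h2 hγβ
          rcases (hzgen _ hsub).lt_or_gt with hneg | hpos
          · exfalso
            apply hR2β
            have hm1 : β - γ ∈ Φ := by
              have h3 := hnegmem _ hsub
              rwa [neg_sub] at h3
            have hz1 : 0 < dotp z (β - γ) := by
              have h3 : dotp z (β - γ) = - dotp z (γ - β) := by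
                rw [dotp_sub_right, dotp_sub_right]; ring
              rw [h3]; linarith
            have hne1 : β - γ ≠ γ := by
              intro h
              have h4 : β = (2:ℝ) • γ := by
                have h5 := sub_eq_iff_eq_add.1 h
                rw [h5, two_smul]
              have h6 : (2:ℝ) • γ ∈ Φ := by rw [← h4]; exact hβΦ
              rcases hscal γ hγΦ 2 h6 with h5 | h5 <;> norm_num at h5
            have hma : β - γ ∈ (Φ.filter (fun x => 0 < dotp z x)).erase β :=
              Finset.mem_erase.2 ⟨fun h => hγ0 (sub_eq_self.1 h),
                Finset.mem_filter.2 ⟨hm1, hz1⟩⟩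
            have hmg : γ ∈ (Φ.filter (fun x => 0 < dotp z x)).erase β :=
              Finset.mem_erase.2 ⟨hγβ, Finset.mem_filter.2 ⟨hγΦ, hzγ⟩⟩
            have h6 := incone_pair hma hmg hne1 zero_le_one zero_le_one
            have h7 : (1:ℝ) • (β - γ) + (1:ℝ) • γ = β := by module
            rwa [h7] at h6
          · have hne2 : γ - β ≠ β := by
              intro h
              have h4 : γ = (2:ℝ) • β := by
                have h5 := sub_eq_iff_eq_add.1 h
                rw [h5, two_smul]
              have h6 : (2:ℝ) • β ∈ Φ := by rw [← h4]; exact hγΦ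
              rcases hscal β hβΦ 2 h6 with h5 | h5 <;> norm_num at h5
            have hma : γ - β ∈ (Φ.filter (fun x => 0 < dotp z x)).erase γ :=
              Finset.mem_erase.2 ⟨fun h => hβ0 (sub_eq_self.1 h),
                Finset.mem_filter.2 ⟨hsub, hpos⟩⟩
            have hmb : β ∈ (Φ.filter (fun x => 0 < dotp z x)).erase γ :=
              Finset.mem_erase.2 ⟨Ne.symm hγβ, Finset.mem_filter.2 ⟨hβΦ, hzβ⟩⟩
            have h6 := incone_pair hma hmb hne2 zero_le_one zero_le_one
            have h7 : (1:ℝ) • (γ - β) + (1:ℝ) • β = γ := by module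
            rwa [h7] at h6
        · exfalso
          have := hzneg γ hγΦ hcγ (not_lt.1 h1) (not_lt.1 h2)
          linarith
  -- transport the positive system by a Weyl element
  obtain ⟨w, hwW, hwfwd, hwsrj⟩ := weyl_trans hRS' hc hΔpos' hΔgen' hΔmin' _ z hzgen rfl
  obtain ⟨hwmem, hwadd, hwsmul, w', hw'W, hvw, hwv⟩ := weyl_props hRS' hwW
  obtain ⟨hw'mem, hw'add, hw'smul, -⟩ := weyl_props hRS' hw'W
  refine ⟨w, hwW, ?_⟩
  apply Set.eq_of_subset_of_subset
  · rintro γ ⟨⟨δ, hδΔ, rfl⟩, hγpos⟩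
    have hδΔ' : δ ∈ Δ := hδΔ
    by_contra hne
    simp only [Set.mem_insert_iff, Set.mem_singleton_iff] at hne
    push_neg at hne
    obtain ⟨hne1, hne2⟩ := hne
    have hδpos := hΔpos' δ hδΔ'
    have hwδ := hwfwd δ hδpos.1 hδpos.2
    have hγc : 0 < dotp c (w δ) := hγpos.2
    have hcone := hR3 (w δ) hwδ.1 hwδ.2 hγc hne1 hne2
    have hΔ3pos : ∀ s ∈ ((Φ.filter (fun x => 0 < dotp z x)).erase (w δ)).image w',
        s ∈ Φ ∧ 0 < dotp c s := by
      intro s hs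
      obtain ⟨t, ht, rfl⟩ := Finset.mem_image.1 hs
      obtain ⟨htne, htP⟩ := Finset.mem_erase.1 ht
      obtain ⟨htΦ, hzt⟩ := Finset.mem_filter.1 htP
      obtain ⟨x, ⟨hxΦ, hcx⟩, hwx⟩ := hwsrj t htΦ hzt
      have h3 : w' t = x := by rw [← hwx, hvw]
      rw [h3]
      exact ⟨hxΦ, hcx⟩
    have hΔ3gen : ∀ γ' ∈ Φ, 0 < dotp c γ' →
        InCone (((Φ.filter (fun x => 0 < dotp z x)).erase (w δ)).image w') γ' := by
      intro γ' h1 h2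
      have hwg := hwfwd γ' h1 h2
      by_cases hq : w γ' = w δ
      · have hγ'δ : γ' = δ := by
          have h3 := congrArg w' hq
          rwa [hvw, hvw] at h3
        have h4 := incone_map w' w hw'add hw'smul hwv hvw hcone
        rw [hvw] at h4
        rw [hγ'δ]
        exact h4
      · apply incone_mem
        exact Finset.mem_image.2 ⟨w γ', Finset.mem_erase.2
          ⟨hq, Finset.mem_filter.2 ⟨hwg.1, hwg.2⟩⟩, hvw γ'⟩
    have hsub := hΔmin' _ hΔ3pos hΔ3gen
    obtain ⟨t, ht, heq⟩ := Finset.mem_image.1 (hsub hδΔ')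
    have ht2 : t = w δ := by rw [← hwv t, heq]
    rw [ht2] at ht
    exact (Finset.mem_erase.1 ht).1 rfl
  · intro γ hγ
    simp only [Set.mem_insert_iff, Set.mem_singleton_iff] at hγ
    have hmain : ∀ ξ, ξ ∈ Φ → 0 < dotp c ξ → 0 < dotp z ξ →
        (¬ InCone ((Φ.filter (fun x => 0 < dotp z x)).erase ξ) ξ) →
        ξ ∈ w '' (Δ : Set (Fin n → ℝ)) := by
      intro ξ hξΦ hcξ hzξ hR2ξ
      by_contra hni
      obtain ⟨x, ⟨hxΦ, hcx⟩, hwx⟩ := hwsrj ξ hξΦ hzξ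
      have h1 := hΔgen' x hxΦ hcx
      have h2 := incone_map w w' hwadd hwsmul hvw hwv h1
      rw [hwx] at h2
      have hsubset : Δ.image w ⊆ (Φ.filter (fun x => 0 < dotp z x)).erase ξ := by
        intro t ht
        obtain ⟨δ, hδ, rfl⟩ := Finset.mem_image.1 ht
        have hp := hΔpos' δ hδ
        have hwd := hwfwd δ hp.1 hp.2
        refine Finset.mem_erase.2 ⟨?_, Finset.mem_filter.2 ⟨hwd.1, hwd.2⟩⟩
        intro h
        exact hni ⟨δ, Finset.mem_coe.2 hδ, h⟩
      exact hR2ξ (incone_mono hsubset h2)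
    rcases hγ with h | h
    · rw [h]; exact ⟨hmain α hαΦ hcα hzα hR2α, hα⟩
    · rw [h]; exact ⟨hmain β hβΦ hcβ hzβ hR2β, hβ⟩
end

section
/- Let G = (V,E) be a finite simple undirected graph and define f : 2^V → ℤ_{≥0} by f(S) = |S| + |N_G(S)|, where N_G(S) = {u ∈ V∖S : uv ∈ E for some v ∈ S}. Then f is a polymatroid (f(∅) = 0, f is nondecreasing, and f is submodular), and the convex hull of the in-degree sequences of branchings of G — that is, the translate N(G) + 𝟙 of the graphical neighbotope by the all-ones vector — equals the polymatroid base polytope B_f. -/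
open Pointwise

/-- `B` is a branching of the graph `G`. -/
def IsBranching {V : Type*} (G : SimpleGraph V) (B : V → V) : Prop :=
  (∀ v, B v = v ∨ G.Adj v (B v)) ∧ ∀ v, ∃ k : ℕ, B^[k + 1] v = B^[k] v

/-- The in-degree sequence `δ(B)` of a branching `B`. -/
noncomputable def inDeg {V : Type*} [Fintype V] [DecidableEq V] (B : V → V) : V → ℝ :=
  fun v => ((Finset.univ.filter fun u => B u = v).card : ℝ)

/-- The reduced in-degree sequence `δ̄(B) = δ(B) - 𝟙`. -/
noncomputable def redInDeg {V : Type*} [Fintype V] [DecidableEq V] (B : V → V) : V → ℝ :=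
  fun v => inDeg B v - 1

/-- The graphical neighbotope `N(G)`. -/
noncomputable def graphNeighbotope {V : Type*} [Fintype V] [DecidableEq V]
    (G : SimpleGraph V) : Set (V → ℝ) :=
  convexHull ℝ {x | ∃ B, IsBranching G B ∧ x = redInDeg B}

lemma greedy_bound {V : Type*} [Fintype V] [DecidableEq V]
    (N : V → Finset V) (hNself : ∀ u, u ∈ N u) (x : V → ℝ)
    (hx1 : ∀ S : Finset V, ∑ v ∈ S, x v ≤
      ((Finset.univ.filter fun u => ((N u) ∩ S).Nonempty).card : ℝ))
    (hx2 : ∑ v, x v = (Fintype.card V : ℝ)) (c : V → ℝ) :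
    ∑ v, c v * x v ≤ ∑ u, (N u).sup' ⟨u, hNself u⟩ c := by
  classical
  suffices h : ∀ (k : ℕ) (c : V → ℝ), (Finset.image c Finset.univ).card ≤ k →
      ∑ v, c v * x v ≤ ∑ u, (N u).sup' ⟨u, hNself u⟩ c from
    h _ c le_rfl
  intro k
  induction k with
  | zero =>
    intro c hc
    have : Finset.image c Finset.univ = ∅ := Finset.card_eq_zero.mp (Nat.le_zero.mp hc)
    have huniv : (Finset.univ : Finset V) = ∅ := Finset.image_eq_empty.mp this
    simp [huniv]
  | succ k ih =>
    intro c hc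
    rcases eq_or_ne (Finset.univ : Finset V) ∅ with huniv | huniv
    · simp [huniv]
    have hVne : (Finset.univ : Finset V).Nonempty := Finset.nonempty_iff_ne_empty.mpr huniv
    have hIne : (Finset.image c Finset.univ).Nonempty := hVne.image c
    set M0 : ℝ := (Finset.image c Finset.univ).max' hIne with hM0
    have hM0mem : M0 ∈ Finset.image c Finset.univ := Finset.max'_mem _ _
    have hle_M0 : ∀ v, c v ≤ M0 := fun v =>
      Finset.le_max' _ _ (Finset.mem_image_of_mem c (Finset.mem_univ v))
    by_cases hcard : (Finset.image c Finset.univ).card ≤ 1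
    · -- c is constant, equality holds
      have hconst : ∀ v, c v = M0 := by
        intro v
        have hv : c v ∈ Finset.image c Finset.univ :=
          Finset.mem_image_of_mem c (Finset.mem_univ v)
        have := Finset.card_le_one.mp hcard (c v) hv M0 hM0mem
        exact this
      have hsup : ∀ u, (N u).sup' ⟨u, hNself u⟩ c = M0 := by
        intro u
        apply le_antisymm
        · exact Finset.sup'_le _ _ fun v _ => hle_M0 v
        · calc M0 = c u := (hconst u).symm
            _ ≤ _ := Finset.le_sup' c (hNself u)
      refine le_of_eq ?_
      calc ∑ v, c v * x v = ∑ v, M0 * x v := by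
            exact Finset.sum_congr rfl fun v _ => by rw [hconst v]
        _ = M0 * ∑ v, x v := by rw [Finset.mul_sum]
        _ = M0 * (Fintype.card V : ℝ) := by rw [hx2]
        _ = ∑ u : V, M0 := by
            rw [Finset.sum_const, Finset.card_univ, nsmul_eq_mul, mul_comm]
        _ = ∑ u, (N u).sup' ⟨u, hNself u⟩ c :=
            (Finset.sum_congr rfl fun u _ => (hsup u)).symm
    · -- at least two values
      push_neg at hcard
      have hEne : ((Finset.image c Finset.univ).erase M0).Nonempty := by
        rw [← Finset.card_pos, Finset.card_erase_of_mem hM0mem]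
        omega
      set m2 : ℝ := ((Finset.image c Finset.univ).erase M0).max' hEne with hm2
      have hm2mem := Finset.max'_mem _ hEne
      have hm2lt : m2 < M0 :=
        lt_of_le_of_ne (Finset.le_max' _ _ (Finset.mem_of_mem_erase hm2mem))
          (Finset.ne_of_mem_erase hm2mem)
      have hle_m2 : ∀ v, c v ≠ M0 → c v ≤ m2 := by
        intro v hv
        exact Finset.le_max' _ _ (Finset.mem_erase.mpr ⟨hv,
          Finset.mem_image_of_mem c (Finset.mem_univ v)⟩)
      set c' : V → ℝ := fun v => if c v = M0 then m2 else c v with hc'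
      have hc'le : ∀ v, c' v ≤ m2 := by
        intro v
        simp only [hc']
        split
        · exact le_rfl
        · exact hle_m2 v (by assumption)
      have himg : Finset.image c' Finset.univ ⊆ (Finset.image c Finset.univ).erase M0 := by
        intro y hy
        rw [Finset.mem_image] at hy
        obtain ⟨v, -, rfl⟩ := hy
        simp only [hc']
        split
        · exact hm2mem
        · exact Finset.mem_erase.mpr ⟨by assumption,
            Finset.mem_image_of_mem c (Finset.mem_univ v)⟩
      have hcard' : (Finset.image c' Finset.univ).card ≤ k := by
        have := Finset.card_le_card himg
        rw [Finset.card_erase_of_mem hM0mem] at this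
        omega
      have hIH := ih c' hcard'
      set S : Finset V := Finset.univ.filter (fun v => c v = M0) with hS
      set d : ℝ := M0 - m2 with hd
      have hdpos : 0 < d := sub_pos.mpr hm2lt
      -- LHS decomposition
      have hLHS : ∑ v, c v * x v = (∑ v, c' v * x v) + d * ∑ v ∈ S, x v := by
        have : ∀ v, c v * x v = c' v * x v + (if c v = M0 then d * x v else 0) := by
          intro v
          by_cases h : c v = M0
          · simp only [hc', hd, h, if_pos]; ring
          · simp [hc', h]
        rw [Finset.sum_congr rfl fun v _ => this v, Finset.sum_add_distrib,
          ← Finset.sum_filter, ← hS, Finset.mul_sum]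
      -- sup decomposition
      have hsup : ∀ u, (N u).sup' ⟨u, hNself u⟩ c =
          (N u).sup' ⟨u, hNself u⟩ c' + (if ((N u) ∩ S).Nonempty then d else 0) := by
        intro u
        by_cases hne : ((N u) ∩ S).Nonempty
        · obtain ⟨w, hw⟩ := hne
          rw [Finset.mem_inter, hS, Finset.mem_filter] at hw
          have hsupc : (N u).sup' ⟨u, hNself u⟩ c = M0 := by
            apply le_antisymm (Finset.sup'_le _ _ fun v _ => hle_M0 v)
            calc M0 = c w := hw.2.2.symm
              _ ≤ _ := Finset.le_sup' c hw.1
          have hsupc' : (N u).sup' ⟨u, hNself u⟩ c' = m2 := by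
            apply le_antisymm (Finset.sup'_le _ _ fun v _ => hc'le v)
            have : c' w = m2 := by simp only [hc', hw.2.2, if_pos]
            calc m2 = c' w := this.symm
              _ ≤ _ := Finset.le_sup' c' hw.1
          rw [hsupc, hsupc', if_pos ⟨w, by rw [Finset.mem_inter, hS, Finset.mem_filter]; exact hw⟩]
          simp [hd]
        · rw [if_neg hne, add_zero]
          apply Finset.sup'_congr _ rfl
          intro v hv
          have hvnS : c v ≠ M0 := by
            intro hvM
            exact hne ⟨v, Finset.mem_inter.mpr ⟨hv, by
              rw [hS, Finset.mem_filter]; exact ⟨Finset.mem_univ v, hvM⟩⟩⟩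
          simp only [hc', if_neg hvnS]
      have hRHS : ∑ u, (N u).sup' ⟨u, hNself u⟩ c =
          (∑ u, (N u).sup' ⟨u, hNself u⟩ c') +
            d * ((Finset.univ.filter fun u => ((N u) ∩ S).Nonempty).card : ℝ) := by
        rw [Finset.sum_congr rfl fun u _ => hsup u, Finset.sum_add_distrib]
        congr 1
        rw [← Finset.sum_filter, Finset.sum_const, nsmul_eq_mul, mul_comm]
      rw [hLHS, hRHS]
      have h1 : d * ∑ v ∈ S, x v ≤
          d * ((Finset.univ.filter fun u => ((N u) ∩ S).Nonempty).card : ℝ) :=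
        mul_le_mul_of_nonneg_left (hx1 S) hdpos.le
      linarith [hIH]

lemma exists_branching_of_preBranching {V : Type*} [Fintype V] [DecidableEq V]
    (G : SimpleGraph V) (B' : V → V) (hB' : ∀ v, B' v = v ∨ G.Adj v (B' v)) :
    ∃ B, IsBranching G B ∧ inDeg B = inDeg B' := by
  classical
  set Per : Set V := {v | ∃ k, 0 < k ∧ B'^[k] v = v} with hPerDef
  set B : V → V := fun v => if v ∈ Per then v else B' v with hB
  have hBper : ∀ v ∈ Per, B v = v := fun v hv => by simp [hB, hv]
  have hBnper : ∀ v, v ∉ Per → B v = B' v := fun v hv => by simp [hB, hv]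
  have hPerSucc : ∀ v ∈ Per, B' v ∈ Per := by
    rintro v ⟨k, hk, hkv⟩
    exact ⟨k, hk, by
      rw [← Function.iterate_succ_apply, Function.iterate_succ_apply', hkv]⟩
  have hEv : ∀ v, ∃ m, B'^[m] v ∈ Per := by
    intro v
    obtain ⟨i, j, hij, hval⟩ :=
      Finite.exists_ne_map_eq_of_infinite (fun i : ℕ => B'^[i] v)
    rcases lt_or_gt_of_ne hij with h | h
    · refine ⟨i, j - i, by omega, ?_⟩
      rw [← Function.iterate_add_apply, Nat.sub_add_cancel h.le, ← hval]
    · refine ⟨j, i - j, by omega, ?_⟩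
      rw [← Function.iterate_add_apply, Nat.sub_add_cancel h.le, hval]
  have huniq : ∀ v ∈ Per, ∀ u₁ ∈ Per, ∀ u₂ ∈ Per, B' u₁ = v → B' u₂ = v → u₁ = u₂ := by
    intro v _ u₁ hu₁ u₂ hu₂ h₁ h₂
    obtain ⟨k₁, hk₁, hkv₁⟩ := hu₁
    obtain ⟨k₂, hk₂, hkv₂⟩ := hu₂
    have hv₁ : B'^[k₁] v = v := by
      calc B'^[k₁] v = B'^[k₁] (B' u₁) := by rw [h₁]
        _ = B' (B'^[k₁] u₁) := by
            rw [← Function.iterate_succ_apply, Function.iterate_succ_apply']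
        _ = B' u₁ := by rw [hkv₁]
        _ = v := h₁
    have hv₂ : B'^[k₂] v = v := by
      calc B'^[k₂] v = B'^[k₂] (B' u₂) := by rw [h₂]
        _ = B' (B'^[k₂] u₂) := by
            rw [← Function.iterate_succ_apply, Function.iterate_succ_apply']
        _ = B' u₂ := by rw [hkv₂]
        _ = v := h₂
    have e₁ : B'^[k₁ - 1] v = u₁ := by
      rw [← h₁, ← Function.iterate_succ_apply, (show (k₁ - 1).succ = k₁ by omega), hkv₁]
    have e₂ : B'^[k₂ - 1] v = u₂ := by
      rw [← h₂, ← Function.iterate_succ_apply, (show (k₂ - 1).succ = k₂ by omega), hkv₂]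
    rw [← e₁, ← e₂]
    conv_lhs => rw [← hv₂]
    rw [← Function.iterate_add_apply]
    conv_rhs => rw [← hv₁]
    rw [← Function.iterate_add_apply]
    congr 1
    omega
  have hexu : ∀ v ∈ Per, ∃ p ∈ Per, B' p = v := by
    rintro v ⟨k, hk, hkv⟩
    refine ⟨B'^[k - 1] v, ⟨k, hk, ?_⟩, ?_⟩
    · rw [← Function.iterate_add_apply]
      conv_rhs => rw [← hkv]
      rw [← Function.iterate_add_apply]
      congr 1
      omega
    · rw [(Function.iterate_succ_apply' B' (k - 1) v).symm.trans
        (by rw [(show k - 1 + 1 = k by omega)] : B'^[k - 1 + 1] v = B'^[k] v), hkv]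
  have hvPer : ∀ v, v ∈ Per ↔ ∃ k, 0 < k ∧ B'^[k] v = v := fun v => Iff.rfl
  refine ⟨B, ⟨?_, ?_⟩, ?_⟩
  · intro v
    by_cases hv : v ∈ Per
    · exact Or.inl (hBper v hv)
    · rw [hBnper v hv]; exact hB' v
  · intro v
    set m := Nat.find (hEv v) with hm
    have hmspec : B'^[m] v ∈ Per := Nat.find_spec (hEv v)
    have hmin : ∀ l, l < m → B'^[l] v ∉ Per := fun l hl => Nat.find_min (hEv v) hl
    have hagree : ∀ l, l ≤ m → B^[l] v = B'^[l] v := by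
      intro l hl
      induction l with
      | zero => rfl
      | succ l ih =>
        rw [Function.iterate_succ_apply', ih (by omega), Function.iterate_succ_apply']
        exact hBnper _ (hmin l (by omega))
    refine ⟨m, ?_⟩
    rw [Function.iterate_succ_apply', hagree m le_rfl]
    exact hBper _ hmspec
  · funext v
    simp only [inDeg]
    congr 1
    by_cases hv : v ∈ Per
    · obtain ⟨p, hpPer, hpv⟩ := hexu v hv
      have h1 : Finset.univ.filter (fun u => B u = v) =
          insert v (Finset.univ.filter (fun u => u ∉ Per ∧ B' u = v)) := by
        ext u
        simp only [Finset.mem_filter, Finset.mem_insert, Finset.mem_univ, true_and]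
        constructor
        · intro hu
          by_cases hup : u ∈ Per
          · left; rw [← hu, hBper u hup]
          · right; exact ⟨hup, by rw [← hBnper u hup]; exact hu⟩
        · rintro (rfl | ⟨hup, hu⟩)
          · exact hBper _ hv
          · rw [hBnper u hup]; exact hu
      have h2 : Finset.univ.filter (fun u => B' u = v) =
          insert p (Finset.univ.filter (fun u => u ∉ Per ∧ B' u = v)) := by
        ext u
        simp only [Finset.mem_filter, Finset.mem_insert, Finset.mem_univ, true_and]
        constructor
        · intro hu
          by_cases hup : u ∈ Per
          · left; exact huniq v hv u hup p hpPer hu hpv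
          · right; exact ⟨hup, hu⟩
        · rintro (rfl | ⟨_, hu⟩)
          · exact hpv
          · exact hu
      rw [h1, h2, Finset.card_insert_of_notMem, Finset.card_insert_of_notMem]
      · simp only [Finset.mem_filter, Finset.mem_univ, true_and, not_and]
        intro hp
        exact absurd hpPer hp
      · simp only [Finset.mem_filter, Finset.mem_univ, true_and, not_and]
        intro hvp
        exact absurd hv hvp
    · congr 1
      apply Finset.filter_congr
      intro u _
      by_cases hup : u ∈ Per
      · rw [hBper u hup]
        constructor
        · rintro rfl; exact absurd hup hv
        · intro hu; exact absurd (hu ▸ hPerSucc u hup) hv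
      · rw [hBnper u hup]

/-- Proposition: `f(S) = |S| + |N_G(S)|` is a polymatroid whose base polytope
is the convex hull of the in-degree sequences of branchings, i.e. the translate `N(G) + 𝟙`. -/
theorem statement18 {V : Type*} [Fintype V] [DecidableEq V] (G : SimpleGraph V)
    [DecidableRel G.Adj] (f : Finset V → ℕ)
    (hf : ∀ S, f S = S.card +
      (Finset.univ.filter fun u => u ∉ S ∧ ∃ v ∈ S, G.Adj u v).card) :
    f ∅ = 0 ∧
    (∀ S T : Finset V, S ⊆ T → f S ≤ f T) ∧
    (∀ S T : Finset V, f (S ∪ T) + f (S ∩ T) ≤ f S + f T) ∧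
    convexHull ℝ {x : V → ℝ | ∃ B, IsBranching G B ∧ x = inDeg B} =
      ((fun _ => (1 : ℝ)) : V → ℝ) +ᵥ graphNeighbotope G ∧
    convexHull ℝ {x : V → ℝ | ∃ B, IsBranching G B ∧ x = inDeg B} =
      {x : V → ℝ | (∀ v, 0 ≤ x v) ∧ (∀ S : Finset V, ∑ v ∈ S, x v ≤ (f S : ℝ)) ∧
        ∑ v, x v = (f Finset.univ : ℝ)} := by
  classical
  set Γ : Finset V → Finset V :=
    fun S => Finset.univ.filter (fun u => u ∈ S ∨ ∃ v ∈ S, G.Adj u v) with hΓdef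
  have hΓmem : ∀ S u, u ∈ Γ S ↔ (u ∈ S ∨ ∃ v ∈ S, G.Adj u v) := by
    intro S u
    simp [hΓdef]
  have hfΓ : ∀ S, f S = (Γ S).card := by
    intro S
    rw [hf]
    have hd : Disjoint S (Finset.univ.filter fun u => u ∉ S ∧ ∃ v ∈ S, G.Adj u v) := by
      rw [Finset.disjoint_left]
      intro a ha hb
      exact (Finset.mem_filter.mp hb).2.1 ha
    have hu : Γ S = S ∪ Finset.univ.filter (fun u => u ∉ S ∧ ∃ v ∈ S, G.Adj u v) := by
      ext u
      rw [hΓmem]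
      simp only [Finset.mem_union, Finset.mem_filter, Finset.mem_univ, true_and]
      tauto
    rw [hu, Finset.card_union_of_disjoint hd]
  have part1 : f ∅ = 0 := by rw [hf]; simp
  have part2 : ∀ S T : Finset V, S ⊆ T → f S ≤ f T := by
    intro S T hST
    rw [hfΓ, hfΓ]
    apply Finset.card_le_card
    intro u hu
    rw [hΓmem] at hu ⊢
    rcases hu with h | ⟨w, hw, ha⟩
    · exact Or.inl (hST h)
    · exact Or.inr ⟨w, hST hw, ha⟩
  have part3 : ∀ S T : Finset V, f (S ∪ T) + f (S ∩ T) ≤ f S + f T := by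
    intro S T
    rw [hfΓ, hfΓ, hfΓ, hfΓ]
    have h1 : Γ (S ∪ T) ⊆ Γ S ∪ Γ T := by
      intro u hu
      rw [hΓmem] at hu
      rw [Finset.mem_union, hΓmem, hΓmem]
      rcases hu with h | ⟨w, hw, ha⟩
      · rcases Finset.mem_union.mp h with h | h
        · exact Or.inl (Or.inl h)
        · exact Or.inr (Or.inl h)
      · rcases Finset.mem_union.mp hw with h | h
        · exact Or.inl (Or.inr ⟨w, h, ha⟩)
        · exact Or.inr (Or.inr ⟨w, h, ha⟩)
    have h2 : Γ (S ∩ T) ⊆ Γ S ∩ Γ T := by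
      intro u hu
      rw [hΓmem] at hu
      rw [Finset.mem_inter, hΓmem, hΓmem]
      rcases hu with h | ⟨w, hw, ha⟩
      · rw [Finset.mem_inter] at h
        exact ⟨Or.inl h.1, Or.inl h.2⟩
      · rw [Finset.mem_inter] at hw
        exact ⟨Or.inr ⟨w, hw.1, ha⟩, Or.inr ⟨w, hw.2, ha⟩⟩
    calc (Γ (S ∪ T)).card + (Γ (S ∩ T)).card
        ≤ (Γ S ∪ Γ T).card + (Γ S ∩ Γ T).card :=
          Nat.add_le_add (Finset.card_le_card h1) (Finset.card_le_card h2)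
      _ = (Γ S).card + (Γ T).card := Finset.card_union_add_card_inter _ _
  -- the neighborhood function
  set N : V → Finset V := fun u => insert u (G.neighborFinset u) with hNdef
  have hNself : ∀ u, u ∈ N u := fun u => Finset.mem_insert_self u _
  have hNmem : ∀ u v, v ∈ N u ↔ (v = u ∨ G.Adj u v) := by
    intro u v
    simp [hNdef]
  have hΓfilter : ∀ S, Γ S = Finset.univ.filter (fun u => ((N u) ∩ S).Nonempty) := by
    intro S
    ext u
    rw [hΓmem]
    simp only [Finset.mem_filter, Finset.mem_univ, true_and]
    simp only [Finset.Nonempty]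
    constructor
    · rintro (h | ⟨w, hw, ha⟩)
      · exact ⟨u, Finset.mem_inter.mpr ⟨hNself u, h⟩⟩
      · exact ⟨w, Finset.mem_inter.mpr ⟨(hNmem u w).mpr (Or.inr ha), hw⟩⟩
    · rintro ⟨w, hw⟩
      rw [Finset.mem_inter, hNmem] at hw
      rcases hw with ⟨(rfl | ha), hwS⟩
      · exact Or.inl hwS
      · exact Or.inr ⟨w, hwS, ha⟩
  have hfuniv : f Finset.univ = Fintype.card V := by
    rw [hfΓ]
    have : Γ Finset.univ = Finset.univ := by
      ext u
      rw [hΓmem]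
      simp
    rw [this, Finset.card_univ]
  -- membership of in-degree sequences in the polytope
  have key : ∀ B' : V → V, (∀ v, B' v = v ∨ G.Adj v (B' v)) →
      (∀ v, (0:ℝ) ≤ inDeg B' v) ∧ (∀ S : Finset V, ∑ v ∈ S, inDeg B' v ≤ (f S : ℝ)) ∧
        ∑ v, inDeg B' v = (f Finset.univ : ℝ) := by
    intro B' hB'
    have hsum : ∀ S : Finset V, ∑ v ∈ S, inDeg B' v =
        ((Finset.univ.filter fun u => B' u ∈ S).card : ℝ) := by
      intro S
      simp only [inDeg]
      rw [← Nat.cast_sum]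
      exact_mod_cast Finset.sum_card_fiberwise_eq_card_filter Finset.univ S B' 
    refine ⟨fun v => by simp [inDeg], fun S => ?_, ?_⟩
    · rw [hsum S, hfΓ]
      have hsub : (Finset.univ.filter fun u => B' u ∈ S) ⊆ Γ S := by
        intro u hu
        have hu' : B' u ∈ S := (Finset.mem_filter.mp hu).2
        rw [hΓmem]
        rcases hB' u with h | h
        · exact Or.inl (h ▸ hu')
        · exact Or.inr ⟨B' u, hu', h⟩
      exact_mod_cast Finset.card_le_card hsub
    · rw [hsum Finset.univ, hfuniv]
      congr 1
      rw [Finset.filter_true_of_mem (fun u _ => Finset.mem_univ (B' u)), Finset.card_univ]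
  -- the polytope is convex
  set P : Set (V → ℝ) := {x : V → ℝ | (∀ v, 0 ≤ x v) ∧
      (∀ S : Finset V, ∑ v ∈ S, x v ≤ (f S : ℝ)) ∧
      ∑ v, x v = (f Finset.univ : ℝ)} with hPdef
  have hPconv : Convex ℝ P := by
    rintro x ⟨hx0, hx1, hx2⟩ y ⟨hy0, hy1, hy2⟩ a b ha hb hab
    refine ⟨fun v => ?_, fun S => ?_, ?_⟩
    · simp only [Pi.add_apply, Pi.smul_apply, smul_eq_mul]
      exact add_nonneg (mul_nonneg ha (hx0 v)) (mul_nonneg hb (hy0 v))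
    · simp only [Pi.add_apply, Pi.smul_apply, smul_eq_mul]
      rw [Finset.sum_add_distrib, ← Finset.mul_sum, ← Finset.mul_sum]
      calc a * ∑ v ∈ S, x v + b * ∑ v ∈ S, y v
          ≤ a * (f S : ℝ) + b * (f S : ℝ) :=
            add_le_add (mul_le_mul_of_nonneg_left (hx1 S) ha)
              (mul_le_mul_of_nonneg_left (hy1 S) hb)
        _ = (f S : ℝ) := by rw [← add_mul, hab, one_mul]
    · simp only [Pi.add_apply, Pi.smul_apply, smul_eq_mul]
      rw [Finset.sum_add_distrib, ← Finset.mul_sum, ← Finset.mul_sum, hx2, hy2,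
        ← add_mul, hab, one_mul]
  -- branchings and pre-branchings give the same set of in-degree sequences
  set D : Set (V → ℝ) :=
    {x : V → ℝ | ∃ B', (∀ v, B' v = v ∨ G.Adj v (B' v)) ∧ x = inDeg B'} with hDdef
  have hBD : {x : V → ℝ | ∃ B, IsBranching G B ∧ x = inDeg B} = D := by
    apply Set.Subset.antisymm
    · rintro x ⟨B, hB, rfl⟩
      exact ⟨B, hB.1, rfl⟩
    · rintro x ⟨B', hB', rfl⟩
      obtain ⟨B, hB, hBeq⟩ := exists_branching_of_preBranching G B' hB'
      exact ⟨B, hB, hBeq.symm⟩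
  -- the main equality
  have conj5 : convexHull ℝ {x : V → ℝ | ∃ B, IsBranching G B ∧ x = inDeg B} = P := by
    apply Set.Subset.antisymm
    · apply convexHull_min _ hPconv
      rintro x ⟨B, hB, rfl⟩
      exact key B hB.1
    · rw [hBD]
      intro x hx
      by_contra hnot
      obtain ⟨hx0, hx1, hx2⟩ := hx
      have hDfin : D.Finite := Set.Finite.subset (Set.finite_range inDeg)
        (by rintro y ⟨B', _, rfl⟩; exact Set.mem_range_self B')
      obtain ⟨φ, u0, hlt, hgt⟩ := geometric_hahn_banach_closed_point
        (convex_convexHull ℝ D) (hDfin.isCompact_convexHull ℝ).isClosed hnot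
      set c : V → ℝ := fun v => φ (fun j => if v = j then 1 else 0) with hcdef
      have hφ : ∀ y : V → ℝ, φ y = ∑ v, y v * c v := by
        intro y
        conv_lhs => rw [pi_eq_sum_univ y]
        rw [map_sum]
        exact Finset.sum_congr rfl fun v _ => by rw [map_smul, smul_eq_mul, hcdef]
      have hx1' : ∀ S : Finset V, ∑ v ∈ S, x v ≤
          ((Finset.univ.filter fun u => ((N u) ∩ S).Nonempty).card : ℝ) := by
        intro S
        have h := hx1 S
        rwa [hfΓ, hΓfilter] at h
      have hx2' : ∑ v, x v = (Fintype.card V : ℝ) := by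
        rw [hx2, hfuniv]
      have hgb := greedy_bound N hNself x hx1' hx2' c
      have hbchoice : ∀ u : V, ∃ w, w ∈ N u ∧ c w = (N u).sup' ⟨u, hNself u⟩ c := by
        intro u
        obtain ⟨w, hw, he⟩ := Finset.exists_mem_eq_sup' ⟨u, hNself u⟩ c
        exact ⟨w, hw, he.symm⟩
      choose bfun hbmem hbeq using hbchoice
      have hbpre : ∀ v, bfun v = v ∨ G.Adj v (bfun v) := by
        intro v
        have := (hNmem v (bfun v)).mp (hbmem v)
        tauto
      have hin : inDeg bfun ∈ D := ⟨bfun, hbpre, rfl⟩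
      have hval : φ (inDeg bfun) = ∑ u, c (bfun u) := by
        rw [hφ]
        simp only [inDeg]
        rw [eq_comm]
        calc ∑ u, c (bfun u)
            = ∑ v ∈ Finset.univ, ∑ u ∈ Finset.univ.filter (fun u => bfun u = v),
                c (bfun u) := by
              rw [Finset.sum_fiberwise_eq_sum_filter]
              simp
          _ = ∑ v, ((Finset.univ.filter fun u => bfun u = v).card : ℝ) * c v := by
              refine Finset.sum_congr rfl fun v _ => ?_
              rw [Finset.sum_congr rfl (fun u hu => by
                rw [(Finset.mem_filter.mp hu).2]), Finset.sum_const, nsmul_eq_mul]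
      have hchain : φ x ≤ φ (inDeg bfun) := by
        rw [hφ x, hval]
        calc ∑ v, x v * c v = ∑ v, c v * x v :=
              Finset.sum_congr rfl fun v _ => mul_comm _ _
          _ ≤ ∑ u, (N u).sup' ⟨u, hNself u⟩ c := hgb
          _ = ∑ u, c (bfun u) := (Finset.sum_congr rfl fun u _ => (hbeq u)).symm
      have h2 := hlt _ (subset_convexHull ℝ D hin)
      linarith
  -- the translation statement
  have hsetEq : {x : V → ℝ | ∃ B, IsBranching G B ∧ x = inDeg B} =
      ((fun _ => (1 : ℝ)) : V → ℝ) +ᵥ {x : V → ℝ | ∃ B, IsBranching G B ∧ x = redInDeg B} := by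
    ext x
    simp only [Set.mem_vadd_set, Set.mem_setOf_eq]
    constructor
    · rintro ⟨B, hB, rfl⟩
      refine ⟨redInDeg B, ⟨B, hB, rfl⟩, ?_⟩
      funext v
      simp only [vadd_eq_add, Pi.add_apply, redInDeg]
      ring
    · rintro ⟨y, ⟨B, hB, rfl⟩, rfl⟩
      refine ⟨B, hB, ?_⟩
      funext v
      simp only [vadd_eq_add, Pi.add_apply, redInDeg]
      ring
  have conj4 : convexHull ℝ {x : V → ℝ | ∃ B, IsBranching G B ∧ x = inDeg B} =
      ((fun _ => (1 : ℝ)) : V → ℝ) +ᵥ graphNeighbotope G := by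
    rw [hsetEq, convexHull_vadd]
    rfl
  exact ⟨part1, part2, part3, conj4, conj5⟩
end
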